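/- arXiv:2111.11551 — 7 statements merged into one kernel-verified Lean document; each statement's English description precedes it below -/
import Mathlib

section
/- Lemma 1 (FP1-feasibility transfers to CP1). Let (ā, d̄, ē, f̄, x, p, q) be a feasible point of problem FP1. Define u_{ijk} := d̄_{ijk}·x_{ijk} for every (i,j)∈IJ and 1≤k≤K_i. Then (ā, d̄, ē, f̄, u, q) is a feasible point of problem CP1, and its CP1 objective value Φ_CP1 equals the FP1 objective value Φ_FP1 of (ā, d̄, ē, f̄, x, p, q). -/
open Finset

noncomputable section

/-- The exponential cone `K_exp ⊆ ℝ³`. -/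
def Kexp : Set (ℝ × ℝ × ℝ) :=
  {v | 0 < v.1 ∧ 0 < v.2.1 ∧ v.2.2 ≤ v.2.1 * Real.log (v.1 / v.2.1)} ∪
  {v | 0 ≤ v.1 ∧ v.2.1 = 0 ∧ v.2.2 ≤ 0}

/-- All network primitives and parameter assumptions for the ride-hailing model
underlying problems FP1 and CP1. -/
structure Params (I : Type) [Fintype I] [DecidableEq I] where
  nonemptyI : Nonempty I
  /-- destination zones reachable with a passenger: `j ∈ Iout i ↔ (i,j) ∈ IJ` -/
  Iout : I → Finset I
  /-- destination zones reachable empty: `j ∈ Itil i ↔ (i,j) ∈ ĨJ` -/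
  Itil : I → Finset I
  IJ_nonempty : ∃ i j, j ∈ Iout i
  connected : ∀ i j : I, ∃ (n : ℕ) (c : ℕ → I),
    c 0 = i ∧ c n = j ∧ ∀ m, m < n → c (m + 1) ∈ Itil (c m)
  K : I → ℕ
  K_pos : ∀ i, 1 ≤ K i
  lam : I → I → ℝ
  mu : I → I → ℝ
  mutil : I → I → ℝ
  nu : ℕ → ℝ
  del : ℕ → ℝ
  sigma : I → ℝ
  om : ℝ
  beta : I → I → ℝ
  alpha : I → I → ℕ → ℝ
  phi : I → I → ℕ → ℝ
  psi : I → I → ℝ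
  lam_pos : ∀ i j, j ∈ Iout i → 0 < lam i j
  mu_pos : ∀ i j, j ∈ Iout i → 0 < mu i j
  mutil_pos : ∀ i j, j ∈ Itil i → 0 < mutil i j
  nu_pos : ∀ k, 1 ≤ k → k ≤ Finset.univ.sup K → 0 < nu k
  nu_strictAnti : ∀ k, 1 ≤ k → k + 1 ≤ Finset.univ.sup K → nu (k + 1) < nu k
  del_zero : del 0 = 0
  del_strictMono : ∀ k, k + 1 ≤ Finset.univ.sup K → del k < del (k + 1)
  sigma_pos : ∀ i, 0 < sigma i
  om_pos : 0 < om
  beta_pos : ∀ i j, j ∈ Iout i → 0 < beta i j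
  alpha_strictAnti : ∀ i j k, j ∈ Iout i → 1 ≤ k → k + 1 ≤ K i →
    alpha i j (k + 1) < alpha i j k
  phi_mono : ∀ i j k, j ∈ Iout i → 1 ≤ k → k + 1 ≤ K i →
    phi i j k ≤ phi i j (k + 1)

variable {I : Type} [Fintype I] [DecidableEq I]

/-- Sign restrictions and constraints (F4), (F5), (F6), shared by FP1 and CP1. -/
def SharedConstraints (P : Params I) (a : I → ℝ) (d : I → I → ℕ → ℝ)
    (e f : I → I → ℝ) : Prop :=
  (∀ i, 0 ≤ a i) ∧
  (∀ i j, j ∈ P.Iout i → ∀ k ∈ Finset.Icc 1 (P.K i), 0 ≤ d i j k) ∧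
  (∀ i j, j ∈ P.Itil i → 0 ≤ e i j) ∧
  (∀ i j, j ∈ P.Iout i → 0 ≤ f i j) ∧
  -- (F4)
  (∀ i j, j ∈ P.Iout i →
    ∑ k ∈ Finset.Icc 1 (P.K i), P.nu k * d i j k = P.mu i j * f i j) ∧
  -- (F5)
  (∀ i : I,
    (∑ j ∈ Finset.univ.filter (fun j => i ∈ P.Itil j), P.mutil j i * e j i) +
    (∑ j ∈ Finset.univ.filter (fun j => i ∈ P.Iout j), P.mu j i * f j i) =
    (∑ j ∈ P.Itil i, P.mutil i j * e i j) +
    (∑ j ∈ P.Iout i, P.mu i j * f i j)) ∧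
  -- (F6)
  ((∑ i, a i) + (∑ i, ∑ j ∈ P.Itil i, e i j) +
    (∑ i, ∑ j ∈ P.Iout i, (f i j + ∑ k ∈ Finset.Icc 1 (P.K i), d i j k)) = 1)

/-- Feasibility for problem FP1. -/
def FP1Feasible (P : Params I) (a : I → ℝ) (d : I → I → ℕ → ℝ)
    (e f : I → I → ℝ) (x p : I → I → ℕ → ℝ) (q : I → ℕ → ℝ) : Prop :=
  SharedConstraints P a d e f ∧
  -- (F1)
  (∀ i, ∀ k ∈ Finset.Icc 1 (P.K i),
    ∑ k' ∈ Finset.Icc 1 k, q i k' =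
      1 - Real.exp (-(P.om * P.del k ^ 2 * a i / P.sigma i))) ∧
  -- (F2)
  (∀ i j, j ∈ P.Iout i → ∀ k ∈ Finset.Icc 1 (P.K i),
    p i j k = Real.exp (P.alpha i j k - P.beta i j * x i j k) /
      (1 + Real.exp (P.alpha i j k - P.beta i j * x i j k))) ∧
  -- (F3)
  (∀ i j, j ∈ P.Iout i → ∀ k ∈ Finset.Icc 1 (P.K i),
    P.lam i j * q i k * p i j k = P.nu k * d i j k)

/-- Feasibility for problem CP1. -/
def CP1Feasible (P : Params I) (a : I → ℝ) (d : I → I → ℕ → ℝ)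
    (e f : I → I → ℝ) (u : I → I → ℕ → ℝ) (q : I → ℕ → ℝ) : Prop :=
  SharedConstraints P a d e f ∧
  (∀ i, ∀ k ∈ Finset.Icc 1 (P.K i), 0 ≤ q i k) ∧
  -- (C1)
  (∀ i, ∀ k ∈ Finset.Icc 1 (P.K i),
    ((1 - ∑ k' ∈ Finset.Icc 1 k, q i k', 1,
      -(P.om * P.del k ^ 2 * a i / P.sigma i)) : ℝ × ℝ × ℝ) ∈ Kexp) ∧
  -- (C2)
  (∀ i j, j ∈ P.Iout i → ∀ k ∈ Finset.Icc 1 (P.K i),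
    ((P.lam i j * q i k - P.nu k * d i j k, P.nu k * d i j k,
      P.beta i j * P.nu k * u i j k - P.alpha i j k * P.nu k * d i j k) :
      ℝ × ℝ × ℝ) ∈ Kexp)

/-- The FP1 objective Φ_FP1. -/
def objFP1 (P : Params I) (d : I → I → ℕ → ℝ) (e : I → I → ℝ)
    (x : I → I → ℕ → ℝ) : ℝ :=
  (∑ i, ∑ j ∈ P.Iout i, ∑ k ∈ Finset.Icc 1 (P.K i),
      P.nu k * d i j k * (x i j k - P.phi i j k)) -
  ∑ i, ∑ j ∈ P.Itil i, P.psi i j * P.mutil i j * e i j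

/-- The CP1 objective Φ_CP1. -/
def objCP1 (P : Params I) (d : I → I → ℕ → ℝ) (e : I → I → ℝ)
    (u : I → I → ℕ → ℝ) : ℝ :=
  (∑ i, ∑ j ∈ P.Iout i, ∑ k ∈ Finset.Icc 1 (P.K i),
      (P.nu k * u i j k - P.nu k * P.phi i j k * d i j k)) -
  ∑ i, ∑ j ∈ P.Itil i, P.psi i j * P.mutil i j * e i j

/-- Optimality for problem CP1. -/
def CP1Optimal (P : Params I) (a : I → ℝ) (d : I → I → ℕ → ℝ)
    (e f : I → I → ℝ) (u : I → I → ℕ → ℝ) (q : I → ℕ → ℝ) : Prop :=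
  CP1Feasible P a d e f u q ∧
  ∀ a' d' e' f' u' q', CP1Feasible P a' d' e' f' u' q' →
    objCP1 P d' e' u' ≤ objCP1 P d e u

/-- Optimality for problem FP1. -/
def FP1Optimal (P : Params I) (a : I → ℝ) (d : I → I → ℕ → ℝ)
    (e f : I → I → ℝ) (x p : I → I → ℕ → ℝ) (q : I → ℕ → ℝ) : Prop :=
  FP1Feasible P a d e f x p q ∧
  ∀ a' d' e' f' x' p' q', FP1Feasible P a' d' e' f' x' p' q' →
    objFP1 P d' e' x' ≤ objFP1 P d e x

/-- Condition (i). -/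
def CondI (P : Params I) (a : I → ℝ) (q : I → ℕ → ℝ) : Prop :=
  ∀ i, ∀ k ∈ Finset.Icc 1 (P.K i),
    ∑ k' ∈ Finset.Icc 1 k, q i k' =
      1 - Real.exp (-(P.om * P.del k ^ 2 * a i / P.sigma i))

/-- Condition (ii). -/
def CondII (P : Params I) (d u : I → I → ℕ → ℝ) (q : I → ℕ → ℝ) : Prop :=
  ∀ i j, j ∈ P.Iout i → ∀ k ∈ Finset.Icc 1 (P.K i),
    (d i j k = 0 ∧ u i j k = 0) ∨
    (0 < d i j k ∧
      P.nu k * d i j k *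
        Real.log (P.nu k * d i j k / (P.lam i j * q i k - P.nu k * d i j k)) =
      P.alpha i j k * P.nu k * d i j k - P.beta i j * P.nu k * u i j k)

/-- Condition (iii) at zone `i`. -/
def CondIII (P : Params I) (d : I → I → ℕ → ℝ) (q : I → ℕ → ℝ) (i : I) : Prop :=
  ∀ k ∈ Finset.Icc 1 (P.K i),
    0 < q i k ∧ 0 < ∑ j ∈ P.Iout i, d i j k

/-- Condition (iv) at zone `i`. -/
def CondIV (P : Params I) (d : I → I → ℕ → ℝ) (q : I → ℕ → ℝ) (i : I) : Prop :=
  ∀ j ∈ P.Iout i,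
    ((∀ k, 1 ≤ k → k + 1 ≤ P.K i →
        P.nu (k + 1) * d i j (k + 1) / (P.lam i j * q i (k + 1)) <
        P.nu k * d i j k / (P.lam i j * q i k)) ∧
      0 < P.nu (P.K i) * d i j (P.K i) / (P.lam i j * q i (P.K i))) ∨
    (∀ k ∈ Finset.Icc 1 (P.K i), d i j k = 0)


/-- Lemma 1: a feasible point of FP1, with `u := d̄ ⬝ x`, yields a feasible point of CP1
with the same objective value. -/
theorem FP1_feasible_to_CP1 {I : Type} [Fintype I] [DecidableEq I] (P : Params I)
    (a : I → ℝ) (d : I → I → ℕ → ℝ) (e f : I → I → ℝ)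
    (x p : I → I → ℕ → ℝ) (q : I → ℕ → ℝ)
    (hfeas : FP1Feasible P a d e f x p q) :
    CP1Feasible P a d e f (fun i j k => d i j k * x i j k) q ∧
    objCP1 P d e (fun i j k => d i j k * x i j k) = objFP1 P d e x := by
  obtain ⟨hshared, hF1, hF2, hF3⟩ := hfeas
  obtain ⟨ha, hd, he, hf, hF4, hF5, hF6⟩ := hshared
  have hKsup : ∀ i : I, P.K i ≤ Finset.univ.sup P.K :=
    fun i => Finset.le_sup (Finset.mem_univ i)
  -- monotonicity of δ below sup K
  have hdel_mono : ∀ n, n ≤ Finset.univ.sup P.K → ∀ m, m ≤ n → P.del m ≤ P.del n := by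
    intro n
    induction n with
    | zero =>
      intro _ m hm
      interval_cases m
      exact le_refl _
    | succ n ih =>
      intro hn m hm
      rcases eq_or_lt_of_le hm with rfl | h
      · exact le_refl _
      · have hmn : m ≤ n := Nat.lt_succ_iff.mp h
        have h1 : P.del m ≤ P.del n := ih (le_trans (Nat.le_succ n) hn) m hmn
        have h2 : P.del n < P.del (n + 1) := P.del_strictMono n hn
        linarith
  have hdel_nonneg : ∀ m, m ≤ Finset.univ.sup P.K → 0 ≤ P.del m := by
    intro m hm
    have := hdel_mono m hm 0 (Nat.zero_le m)
    rwa [P.del_zero] at this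
  -- partial sums of q
  have hS : ∀ i m, m + 1 ∈ Finset.Icc 1 (P.K i) →
      ∑ k' ∈ Finset.Icc 1 m, q i k' =
        1 - Real.exp (-(P.om * P.del m ^ 2 * a i / P.sigma i)) := by
    intro i m hm
    rcases Nat.eq_zero_or_pos m with rfl | hm1
    · simp [P.del_zero]
    · refine hF1 i m (Finset.mem_Icc.mpr ⟨hm1, ?_⟩)
      exact Nat.le_of_succ_le (Finset.mem_Icc.mp hm).2
  -- explicit formula for q
  have hq_eq : ∀ i, ∀ k ∈ Finset.Icc 1 (P.K i),
      q i k = Real.exp (-(P.om * P.del (k - 1) ^ 2 * a i / P.sigma i)) -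
        Real.exp (-(P.om * P.del k ^ 2 * a i / P.sigma i)) := by
    intro i k hk
    obtain ⟨hk1, hk2⟩ := Finset.mem_Icc.mp hk
    obtain ⟨m, rfl⟩ : ∃ m, k = m + 1 := ⟨k - 1, (Nat.succ_pred_eq_of_pos hk1).symm⟩
    have hSm := hS i m hk
    have hSm1 := hF1 i (m + 1) hk
    have hsum : ∑ k' ∈ Finset.Icc 1 (m + 1), q i k' =
        (∑ k' ∈ Finset.Icc 1 m, q i k') + q i (m + 1) :=
      Finset.sum_Icc_succ_top (Nat.succ_le_succ (Nat.zero_le m)) _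
    simp only [Nat.add_sub_cancel]
    linarith
  -- q nonneg
  have hq_nonneg : ∀ i, ∀ k ∈ Finset.Icc 1 (P.K i), 0 ≤ q i k := by
    intro i k hk
    obtain ⟨hk1, hk2⟩ := Finset.mem_Icc.mp hk
    rw [hq_eq i k hk]
    have hksup : k ≤ Finset.univ.sup P.K := le_trans hk2 (hKsup i)
    have hd1 : P.del (k - 1) ≤ P.del k := hdel_mono k hksup (k - 1) (Nat.sub_le k 1)
    have hd0 : 0 ≤ P.del (k - 1) := hdel_nonneg (k - 1) (le_trans (Nat.sub_le k 1) hksup)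
    have hsq : P.del (k - 1) ^ 2 ≤ P.del k ^ 2 := by nlinarith
    have ht : P.om * P.del (k - 1) ^ 2 * a i / P.sigma i ≤
        P.om * P.del k ^ 2 * a i / P.sigma i := by
      have hσ := P.sigma_pos i
      have hω := P.om_pos
      have hai := ha i
      have hnum : P.om * P.del (k - 1) ^ 2 * a i ≤ P.om * P.del k ^ 2 * a i :=
        mul_le_mul_of_nonneg_right (mul_le_mul_of_nonneg_left hsq hω.le) hai
      exact (div_le_div_iff_of_pos_right hσ).mpr hnum
    have := Real.exp_le_exp.mpr (neg_le_neg ht)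
    linarith
  refine ⟨⟨⟨ha, hd, he, hf, hF4, hF5, hF6⟩, hq_nonneg, ?_, ?_⟩, ?_⟩
  · -- (C1)
    intro i k hk
    left
    have h1 := hF1 i k hk
    refine ⟨?_, one_pos, ?_⟩
    · show (0:ℝ) < 1 - ∑ k' ∈ Finset.Icc 1 k, q i k'
      rw [h1]
      have := Real.exp_pos (-(P.om * P.del k ^ 2 * a i / P.sigma i))
      linarith
    · show -(P.om * P.del k ^ 2 * a i / P.sigma i) ≤
        1 * Real.log ((1 - ∑ k' ∈ Finset.Icc 1 k, q i k') / 1)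
      rw [h1]
      have : (1:ℝ) - (1 - Real.exp (-(P.om * P.del k ^ 2 * a i / P.sigma i))) =
          Real.exp (-(P.om * P.del k ^ 2 * a i / P.sigma i)) := by ring
      rw [this, div_one, Real.log_exp, one_mul]
  · -- (C2)
    intro i j hj k hk
    obtain ⟨hk1, hk2⟩ := Finset.mem_Icc.mp hk
    have hν : 0 < P.nu k := P.nu_pos k hk1 (le_trans hk2 (hKsup i))
    have hlam : 0 < P.lam i j := P.lam_pos i j hj
    have hβ : 0 < P.beta i j := P.beta_pos i j hj
    have hp := hF2 i j hj k hk
    have h3 := hF3 i j hj k hk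
    set A := P.alpha i j k - P.beta i j * x i j k with hA
    set E := Real.exp A with hEdef
    have hE : 0 < E := Real.exp_pos A
    have h1E : (0:ℝ) < 1 + E := by linarith
    rcases eq_or_lt_of_le (hq_nonneg i k hk) with hq0 | hqpos
    · -- q = 0 case
      right
      have hνd : P.nu k * d i j k = 0 := by rw [← h3, ← hq0]; ring
      have hd0 : d i j k = 0 := by
        rcases mul_eq_zero.mp hνd with h | h
        · exact absurd h (ne_of_gt hν)
        · exact h
      refine ⟨?_, hνd, ?_⟩
      · show (0:ℝ) ≤ P.lam i j * q i k - P.nu k * d i j k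
        rw [hνd, ← hq0]; simp
      · show P.beta i j * P.nu k * (d i j k * x i j k) -
          P.alpha i j k * P.nu k * d i j k ≤ 0
        rw [hd0]; ring_nf; exact le_refl _
    · -- q > 0 case
      left
      have hνd : P.nu k * d i j k = P.lam i j * q i k * (E / (1 + E)) := by
        rw [← h3, hp]
      have hlamq : 0 < P.lam i j * q i k := mul_pos hlam hqpos
      have hfirst : P.lam i j * q i k - P.nu k * d i j k =
          P.lam i j * q i k / (1 + E) := by
        rw [hνd]; field_simp; ring
      have hsecond : 0 < P.nu k * d i j k := by
        rw [hνd]; positivity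
      refine ⟨?_, hsecond, ?_⟩
      · show (0:ℝ) < P.lam i j * q i k - P.nu k * d i j k
        rw [hfirst]; positivity
      · show P.beta i j * P.nu k * (d i j k * x i j k) -
          P.alpha i j k * P.nu k * d i j k ≤
          P.nu k * d i j k *
            Real.log ((P.lam i j * q i k - P.nu k * d i j k) / (P.nu k * d i j k))
        have hfrac : (P.lam i j * q i k - P.nu k * d i j k) / (P.nu k * d i j k) =
            Real.exp (-A) := by
          rw [hfirst, hνd, Real.exp_neg, ← hEdef]
          field_simp
        rw [hfrac, Real.log_exp, hA]
        exact le_of_eq (by ring)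
  · -- objectives agree
    unfold objCP1 objFP1
    congr 1
    refine Finset.sum_congr rfl fun i _ => Finset.sum_congr rfl fun j _ =>
      Finset.sum_congr rfl fun k _ => by ring

end
end

section
/- Lemma 3 (Condition (ii) holds at every optimum of CP1). Let (ā*, d̄*, ē*, f̄*, u*, q*) be an optimal solution of problem CP1. Then for every (i,j)∈IJ and 1≤k≤K_i, either (d̄*_{ijk}=0 and u*_{ijk}=0), or (d̄*_{ijk}>0 and ν_k d̄*_{ijk}·log(ν_k d̄*_{ijk}/(λ_{ij} q*_{ik} − ν_k d̄*_{ijk})) = α_{ijk} ν_k d̄*_{ijk} − β_{ij} ν_k u*_{ijk}); that is, Condition (ii) holds at (ā*, d̄*, ē*, f̄*, u*, q*). -/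
open Finset

noncomputable section

variable {I : Type} [Fintype I] [DecidableEq I]

/-- Increasing `u` at a single triple strictly increases the CP1 objective. -/
lemma aux_obj_lt {I : Type} [Fintype I] [DecidableEq I] (P : Params I)
    (d : I → I → ℕ → ℝ) (e : I → I → ℝ) (u u' : I → I → ℕ → ℝ)
    (i j : I) (k : ℕ) (hj : j ∈ P.Iout i) (hk : k ∈ Finset.Icc 1 (P.K i))
    (hν : 0 < P.nu k)
    (heq : ∀ i' j' k', ¬(i' = i ∧ j' = j ∧ k' = k) → u' i' j' k' = u i' j' k')
    (hlt : u i j k < u' i j k) :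
    objCP1 P d e u < objCP1 P d e u' := by
  unfold objCP1
  apply sub_lt_sub_right
  apply Finset.sum_lt_sum
  · intro i' _
    apply Finset.sum_le_sum
    intro j' _
    apply Finset.sum_le_sum
    intro k' _
    by_cases h : i' = i ∧ j' = j ∧ k' = k
    · obtain ⟨rfl, rfl, rfl⟩ := h
      nlinarith
    · rw [heq i' j' k' h]
  · refine ⟨i, Finset.mem_univ i, ?_⟩
    apply Finset.sum_lt_sum
    · intro j' _
      apply Finset.sum_le_sum
      intro k' _
      by_cases h : i = i ∧ j' = j ∧ k' = k
      · obtain ⟨-, rfl, rfl⟩ := h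
        nlinarith
      · rw [heq i j' k' h]
    · refine ⟨j, hj, ?_⟩
      apply Finset.sum_lt_sum
      · intro k' _
        by_cases h : i = i ∧ j = j ∧ k' = k
        · obtain ⟨-, -, rfl⟩ := h
          nlinarith
        · rw [heq i j k' h]
      · exact ⟨k, hk, by nlinarith⟩

/-- Lemma 3: Condition (ii) holds at every optimal solution of CP1. -/
theorem CondII_at_CP1_optimum {I : Type} [Fintype I] [DecidableEq I] (P : Params I)
    (a : I → ℝ) (d : I → I → ℕ → ℝ) (e f : I → I → ℝ)
    (u : I → I → ℕ → ℝ) (q : I → ℕ → ℝ)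
    (hopt : CP1Optimal P a d e f u q) :
    CondII P d u q := by
  intro i j hj k hk
  obtain ⟨hfeas, hoptim⟩ := hopt
  obtain ⟨hshared, hq, hC1, hC2⟩ := hfeas
  have hk' := Finset.mem_Icc.mp hk
  have hνpos : 0 < P.nu k :=
    P.nu_pos k hk'.1 (le_trans hk'.2 (Finset.le_sup (Finset.mem_univ i)))
  have hlam : 0 < P.lam i j := P.lam_pos i j hj
  have hbeta : 0 < P.beta i j := P.beta_pos i j hj
  have hq0 : 0 ≤ q i k := hq i k hk
  have hd0 : 0 ≤ d i j k := hshared.2.1 i j hj k hk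
  have hC2' := hC2 i j hj k hk
  -- key improvement principle from optimality
  have himprove : ∀ t : ℝ,
      ((P.lam i j * q i k - P.nu k * d i j k, P.nu k * d i j k,
        P.beta i j * P.nu k * t - P.alpha i j k * P.nu k * d i j k) :
        ℝ × ℝ × ℝ) ∈ Kexp → t ≤ u i j k := by
    intro t hmem
    by_contra hgt
    push_neg at hgt
    set u' : I → I → ℕ → ℝ :=
      fun i' j' k' => if i' = i ∧ j' = j ∧ k' = k then t else u i' j' k' with hu'
    have hfeas' : CP1Feasible P a d e f u' q := by
      refine ⟨hshared, hq, hC1, ?_⟩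
      intro i' j' hj' k' hk''
      by_cases h : i' = i ∧ j' = j ∧ k' = k
      · obtain ⟨rfl, rfl, rfl⟩ := h
        simpa [hu'] using hmem
      · have hval : u' i' j' k' = u i' j' k' := by simp [hu', h]
        rw [hval]
        exact hC2 i' j' hj' k' hk''
    have hlt := aux_obj_lt P d e u u' i j k hj hk hνpos
      (fun i' j' k' h => by simp [hu', h]) (by simpa [hu'] using hgt)
    exact absurd (hoptim a d e f u' q hfeas') (not_le.mpr hlt)
  rcases eq_or_lt_of_le hd0 with hdz | hdpos
  · -- case d = 0 : show u = 0
    left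
    refine ⟨hdz.symm, ?_⟩
    have hule : u i j k ≤ 0 := by
      rcases hC2' with ⟨h1, h2, h3⟩ | ⟨h1, h2, h3⟩
      · simp only at h2
        rw [← hdz] at h2
        simp at h2
      · simp only at h3
        rw [← hdz] at h3
        nlinarith [mul_pos hbeta hνpos]
    have huge : (0 : ℝ) ≤ u i j k := by
      apply himprove
      right
      refine ⟨?_, ?_, ?_⟩ <;> simp [← hdz] <;> positivity
    linarith
  · -- case d > 0
    right
    refine ⟨hdpos, ?_⟩
    have hνd : 0 < P.nu k * d i j k := mul_pos hνpos hdpos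
    obtain ⟨h1, h2, h3⟩ :
        0 < P.lam i j * q i k - P.nu k * d i j k ∧
        0 < P.nu k * d i j k ∧
        P.beta i j * P.nu k * u i j k - P.alpha i j k * P.nu k * d i j k ≤
          P.nu k * d i j k *
            Real.log ((P.lam i j * q i k - P.nu k * d i j k) / (P.nu k * d i j k)) := by
      rcases hC2' with h | ⟨h1, h2, h3⟩
      · exact h
      · simp only at h2
        nlinarith
    set L := Real.log ((P.lam i j * q i k - P.nu k * d i j k) / (P.nu k * d i j k))
      with hL
    -- tightness: apply the improvement principle to the maximal value of t
    have hB : 0 < P.beta i j * P.nu k := mul_pos hbeta hνpos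
    have htle := himprove
      ((P.nu k * d i j k * L + P.alpha i j k * P.nu k * d i j k) / (P.beta i j * P.nu k))
      (by
        left
        refine ⟨h1, h2, le_of_eq ?_⟩
        simp only
        rw [← hL]
        field_simp
        ring)
    have hkey : P.nu k * d i j k * L + P.alpha i j k * P.nu k * d i j k ≤
        P.beta i j * P.nu k * u i j k := by
      rw [div_le_iff₀ hB] at htle
      linarith [htle]
    have heqn : P.beta i j * P.nu k * u i j k - P.alpha i j k * P.nu k * d i j k =
        P.nu k * d i j k * L := le_antisymm h3 (by linarith)
    have hloginv : Real.log (P.nu k * d i j k /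
        (P.lam i j * q i k - P.nu k * d i j k)) = -L := by
      rw [hL, ← Real.log_inv, inv_div]
    rw [hloginv]
    linarith [heqn]

end
end

section
/- Lemma 4 (Conditions (iii) and (iv) imply Condition (i) at an optimum of CP1). Let (ā*, d̄*, ē*, f̄*, u*, q*) be an optimal solution of problem CP1 such that, for every i∈I with ā*_i>0, Condition (iii) at zone i and Condition (iv) at zone i both hold. Then for every i∈I and every 1≤k≤K_i, Σ_{k'=1}^{k} q*_{ik'} = 1 − exp(−ω δ_k² ā*_i/σ_i); that is, Condition (i) holds at (ā*, d̄*, ē*, f̄*, u*, q*). -/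
open Finset

noncomputable section

variable {I : Type} [Fintype I] [DecidableEq I]

lemma mem_Kexp_one {A B : ℝ} (h : ((A, 1, B) : ℝ × ℝ × ℝ) ∈ Kexp) : Real.exp B ≤ A := by
  rcases h with ⟨h1, _, h3⟩ | ⟨_, h2, _⟩
  · simp only [div_one, one_mul] at h3
    calc Real.exp B ≤ Real.exp (Real.log A) := Real.exp_le_exp.mpr h3
    _ = A := Real.exp_log h1
  · norm_num at h2

lemma one_mem_Kexp {A B : ℝ} (h : Real.exp B ≤ A) : ((A, 1, B) : ℝ × ℝ × ℝ) ∈ Kexp := by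
  have hA : 0 < A := lt_of_lt_of_le (Real.exp_pos B) h
  refine Or.inl ⟨hA, one_pos, ?_⟩
  simp only [div_one, one_mul]
  calc B = Real.log (Real.exp B) := (Real.log_exp B).symm
  _ ≤ Real.log A := Real.log_le_log (Real.exp_pos B) h

lemma Kexp_fst_pos {v : ℝ × ℝ × ℝ} (h : v ∈ Kexp) (h2 : 0 < v.2.1) :
    0 < v.1 ∧ v.2.2 ≤ v.2.1 * Real.log (v.1 / v.2.1) := by
  rcases h with ⟨h1, _, h3⟩ | ⟨_, hz, _⟩
  · exact ⟨h1, h3⟩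
  · rw [hz] at h2; exact absurd h2 (lt_irrefl 0)

lemma log_gain {x t : ℝ} (hx : 0 < x) (ht : 0 ≤ t) :
    t / x - t ^ 2 / x ^ 2 ≤ Real.log (x + t) - Real.log x := by
  have hxt : 0 < x + t := by linarith
  have h1 : Real.log (x / (x + t)) ≤ x / (x + t) - 1 :=
    Real.log_le_sub_one_of_pos (by positivity)
  rw [Real.log_div hx.ne' hxt.ne'] at h1
  have h2 : x / (x + t) - 1 = -(t / (x + t)) := by field_simp; ring
  have h3 : t / x - t ^ 2 / x ^ 2 ≤ t / (x + t) := by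
    have h4 : t / x - t ^ 2 / x ^ 2 = t * (x - t) / x ^ 2 := by field_simp
    rw [h4, div_le_div_iff₀ (by positivity) hxt]
    nlinarith [mul_nonneg ht (mul_nonneg ht ht)]
  linarith

lemma log_loss {y t : ℝ} (hy : 0 < y) (ht : 0 ≤ t) (hty : t ≤ y / 2) :
    -(t / y + 2 * t ^ 2 / y ^ 2) ≤ Real.log (y - t) - Real.log y := by
  have hyt : 0 < y - t := by linarith
  have h1 : Real.log (y / (y - t)) ≤ y / (y - t) - 1 :=
    Real.log_le_sub_one_of_pos (by positivity)
  rw [Real.log_div hy.ne' hyt.ne'] at h1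
  have h2 : y / (y - t) - 1 = t / (y - t) := by field_simp; ring
  have h3 : t / (y - t) ≤ t / y + 2 * t ^ 2 / y ^ 2 := by
    have h4 : t / y + 2 * t ^ 2 / y ^ 2 = (t * y + 2 * t ^ 2) / y ^ 2 := by field_simp
    rw [h4, div_le_div_iff₀ hyt (by positivity)]
    nlinarith [mul_nonneg (mul_nonneg ht ht) (by linarith : (0:ℝ) ≤ y - 2 * t)]
  linarith

lemma term_pos {lam beta A B p r : ℝ} (hl : 0 < lam) (hb : 0 < beta)
    (hX : 0 < p - A) (hY : 0 < r - B) (hB : 0 ≤ B)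
    (hlt : B / r < A / p) (hp : 0 < p) (hr : 0 < r) :
    0 < lam * (A / (beta * (p - A)) - B / (beta * (r - B))) := by
  rw [div_lt_div_iff₀ hr hp] at hlt
  have h1 : B / (beta * (r - B)) < A / (beta * (p - A)) := by
    rw [div_lt_div_iff₀ (by positivity) (by positivity)]
    nlinarith
  have := sub_pos.mpr h1
  positivity

lemma C2_perturb {lam beta nu al dd qq uu ε : ℝ} (hb : 0 < beta) (hn : 0 < nu)
    (hd : 0 ≤ dd)
    (horig : ((lam * qq - nu * dd, nu * dd, beta * nu * uu - al * nu * dd) : ℝ × ℝ × ℝ) ∈ Kexp)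
    (hpos : 0 < lam * (qq + ε) - nu * dd) :
    ((lam * (qq + ε) - nu * dd, nu * dd,
      beta * nu * (uu + dd / beta *
        (Real.log (lam * (qq + ε) - nu * dd) - Real.log (lam * qq - nu * dd))) -
      al * nu * dd) : ℝ × ℝ × ℝ) ∈ Kexp := by
  rcases hd.eq_or_lt with hd0 | hd0
  · -- dd = 0
    subst hd0
    simp only [mul_zero, sub_zero, zero_div, zero_mul, add_zero] at horig hpos ⊢
    rcases horig with ⟨_, h2, _⟩ | ⟨_, _, h3⟩
    · norm_num at h2
    · exact Or.inr ⟨hpos.le, rfl, h3⟩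
  · -- dd > 0
    have hnd : 0 < nu * dd := by positivity
    rcases horig with ⟨h1, _, h3⟩ | ⟨_, h2, _⟩
    · have hX : 0 < lam * qq - nu * dd := h1
      refine Or.inl ⟨hpos, hnd, ?_⟩
      show beta * nu * (uu + dd / beta *
          (Real.log (lam * (qq + ε) - nu * dd) - Real.log (lam * qq - nu * dd))) -
          al * nu * dd ≤ nu * dd * Real.log ((lam * (qq + ε) - nu * dd) / (nu * dd))
      replace h3 : beta * nu * uu - al * nu * dd ≤
          nu * dd * Real.log ((lam * qq - nu * dd) / (nu * dd)) := h3
      rw [Real.log_div hpos.ne' hnd.ne']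
      rw [Real.log_div hX.ne' hnd.ne'] at h3
      have hkey : beta * nu * (dd / beta *
          (Real.log (lam * (qq + ε) - nu * dd) - Real.log (lam * qq - nu * dd))) =
          nu * dd * (Real.log (lam * (qq + ε) - nu * dd) - Real.log (lam * qq - nu * dd)) := by
        field_simp
      nlinarith [hkey]
    · exact absurd h2 hnd.ne'

lemma perj {lam beta nu1 nu2 d1 d2 q1 q2 ε : ℝ} (hl : 0 < lam) (hb : 0 < beta)
    (hn1 : 0 < nu1) (hn2 : 0 < nu2) (hd1 : 0 ≤ d1) (hd2 : 0 ≤ d2)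
    (hX : 0 < lam * q1 - nu1 * d1) (hY : 0 < lam * q2 - nu2 * d2)
    (hε : 0 ≤ ε) (hεY : lam * ε ≤ (lam * q2 - nu2 * d2) / 2) :
    ε * (lam * (nu1 * d1 / (beta * (lam * q1 - nu1 * d1)) -
        nu2 * d2 / (beta * (lam * q2 - nu2 * d2)))) -
      ε ^ 2 * (lam ^ 2 * (nu1 * d1 / (beta * (lam * q1 - nu1 * d1) ^ 2) +
        2 * nu2 * d2 / (beta * (lam * q2 - nu2 * d2) ^ 2)))
    ≤ nu1 * (d1 / beta * (Real.log (lam * (q1 + ε) - nu1 * d1) -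
        Real.log (lam * q1 - nu1 * d1))) +
      nu2 * (d2 / beta * (Real.log (lam * (q2 + -ε) - nu2 * d2) -
        Real.log (lam * q2 - nu2 * d2))) := by
  set x := lam * q1 - nu1 * d1 with hxdef
  set y := lam * q2 - nu2 * d2 with hydef
  have ht : 0 ≤ lam * ε := by positivity
  have e1 : lam * (q1 + ε) - nu1 * d1 = x + lam * ε := by rw [hxdef]; ring
  have e2 : lam * (q2 + -ε) - nu2 * d2 = y - lam * ε := by rw [hydef]; ring
  rw [e1, e2]
  have g1 : lam * ε / x - (lam * ε) ^ 2 / x ^ 2 ≤ Real.log (x + lam * ε) - Real.log x :=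
    log_gain hX ht
  have g2 : -(lam * ε / y + 2 * (lam * ε) ^ 2 / y ^ 2) ≤ Real.log (y - lam * ε) - Real.log y :=
    log_loss hY ht hεY
  have c1 : nu1 * (d1 / beta) * (lam * ε / x - (lam * ε) ^ 2 / x ^ 2) ≤
      nu1 * (d1 / beta * (Real.log (x + lam * ε) - Real.log x)) := by
    calc nu1 * (d1 / beta) * (lam * ε / x - (lam * ε) ^ 2 / x ^ 2)
        ≤ nu1 * (d1 / beta) * (Real.log (x + lam * ε) - Real.log x) :=
          mul_le_mul_of_nonneg_left g1 (by positivity)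
      _ = nu1 * (d1 / beta * (Real.log (x + lam * ε) - Real.log x)) := by ring
  have c2 : nu2 * (d2 / beta) * (-(lam * ε / y + 2 * (lam * ε) ^ 2 / y ^ 2)) ≤
      nu2 * (d2 / beta * (Real.log (y - lam * ε) - Real.log y)) := by
    calc nu2 * (d2 / beta) * (-(lam * ε / y + 2 * (lam * ε) ^ 2 / y ^ 2))
        ≤ nu2 * (d2 / beta) * (Real.log (y - lam * ε) - Real.log y) :=
          mul_le_mul_of_nonneg_left g2 (by positivity)
      _ = nu2 * (d2 / beta * (Real.log (y - lam * ε) - Real.log y)) := by ring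
  have key : ε * (lam * (nu1 * d1 / (beta * x) - nu2 * d2 / (beta * y))) -
      ε ^ 2 * (lam ^ 2 * (nu1 * d1 / (beta * x ^ 2) + 2 * nu2 * d2 / (beta * y ^ 2))) =
      nu1 * (d1 / beta) * (lam * ε / x - (lam * ε) ^ 2 / x ^ 2) +
      nu2 * (d2 / beta) * (-(lam * ε / y + 2 * (lam * ε) ^ 2 / y ^ 2)) := by
    field_simp
    ring
  linarith
lemma perturb_feasible {I : Type} [Fintype I] [DecidableEq I] (P : Params I)
    (a : I → ℝ) (d : I → I → ℕ → ℝ) (e f : I → I → ℝ) (u : I → I → ℕ → ℝ) (q : I → ℕ → ℝ)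
    (hfeas : CP1Feasible P a d e f u q) (i : I) (k : ℕ) (hk : k ∈ Finset.Icc 1 (P.K i))
    (ε1 ε2 : ℝ) (D1 D2 : I → ℝ)
    (hq1 : 0 ≤ q i k + ε1)
    (hq2 : k + 1 ≤ P.K i → 0 ≤ q i (k + 1) + ε2)
    (hsum : k + 1 ≤ P.K i → ε1 + ε2 = 0)
    (hC1k : (∑ k' ∈ Finset.Icc 1 k, q i k') + ε1 ≤
      1 - Real.exp (-(P.om * P.del k ^ 2 * a i / P.sigma i)))
    (hC2k : ∀ j ∈ P.Iout i,
      ((P.lam i j * (q i k + ε1) - P.nu k * d i j k, P.nu k * d i j k,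
        P.beta i j * P.nu k * (u i j k + D1 j) - P.alpha i j k * P.nu k * d i j k) :
        ℝ × ℝ × ℝ) ∈ Kexp)
    (hC2k1 : k + 1 ≤ P.K i → ∀ j ∈ P.Iout i,
      ((P.lam i j * (q i (k + 1) + ε2) - P.nu (k + 1) * d i j (k + 1),
        P.nu (k + 1) * d i j (k + 1),
        P.beta i j * P.nu (k + 1) * (u i j (k + 1) + D2 j) -
          P.alpha i j (k + 1) * P.nu (k + 1) * d i j (k + 1)) : ℝ × ℝ × ℝ) ∈ Kexp) :
    CP1Feasible P a d e f
      (fun i' j k' => u i' j k' + (if i' = i ∧ k' = k then D1 j else 0) +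
        (if i' = i ∧ k' = k + 1 then D2 j else 0))
      (fun i' k' => q i' k' + (if i' = i ∧ k' = k then ε1 else 0) +
        (if i' = i ∧ k' = k + 1 then ε2 else 0)) ∧
    objCP1 P d e (fun i' j k' => u i' j k' + (if i' = i ∧ k' = k then D1 j else 0) +
        (if i' = i ∧ k' = k + 1 then D2 j else 0)) =
      objCP1 P d e u + ∑ j ∈ P.Iout i,
        (P.nu k * D1 j + (if k + 1 ≤ P.K i then P.nu (k + 1) * D2 j else 0)) := by
  obtain ⟨hsh, hqnn, hC1, hC2⟩ := hfeas
  rw [Finset.mem_Icc] at hk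
  obtain ⟨hk1, hkK⟩ := hk
  have hkk1 : k ≠ k + 1 := by omega
  -- sum formula for the perturbed q at zone i
  have hqsum : ∀ m : ℕ,
      (∑ k' ∈ Finset.Icc 1 m, (q i k' + (if i = i ∧ k' = k then ε1 else 0) +
        (if i = i ∧ k' = k + 1 then ε2 else 0))) =
      (∑ k' ∈ Finset.Icc 1 m, q i k') + (if k ≤ m then ε1 else 0) +
        (if k + 1 ≤ m then ε2 else 0) := by
    intro m
    rw [Finset.sum_add_distrib, Finset.sum_add_distrib]
    congr 1
    · congr 1
      simp only [true_and]
      rw [Finset.sum_ite_eq' (Finset.Icc 1 m) k (fun _ => ε1)]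
      simp [Finset.mem_Icc, hk1]
    · simp only [true_and]
      rw [Finset.sum_ite_eq' (Finset.Icc 1 m) (k + 1) (fun _ => ε2)]
      simp [Finset.mem_Icc, Nat.le_add_left]
  constructor
  · refine ⟨hsh, ?_, ?_, ?_⟩
    · -- nonnegativity of q'
      intro i' k' hk'
      by_cases hi : i = i'
      · subst hi
        by_cases hkk : k' = k
        · subst hkk
          simp only [true_and, if_pos rfl, if_neg hkk1]
          simpa using hq1
        · by_cases hkk' : k' = k + 1
          · subst hkk'
            simp only [true_and, if_neg hkk1.symm, if_pos rfl, add_zero]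
            rw [Finset.mem_Icc] at hk'
            have := hq2 hk'.2
            simpa using this
          · simp only [true_and, if_neg hkk, if_neg hkk', add_zero]
            simpa using hqnn i k' hk'
      · have hi' : ¬ i' = i := fun h => hi h.symm
        simp only [if_neg (by simp [hi'] : ¬(i' = i ∧ k' = k)),
          if_neg (by simp [hi'] : ¬(i' = i ∧ k' = k + 1)), add_zero]
        exact hqnn i' k' hk'
    · -- C1
      intro i' m hm
      rw [Finset.mem_Icc] at hm
      apply one_mem_Kexp
      by_cases hi : i = i'
      · subst hi
        rw [hqsum m]
        by_cases hm2 : k ≤ m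
        · by_cases hm1 : k + 1 ≤ m
          · rw [if_pos hm2, if_pos hm1]
            have h0 := mem_Kexp_one (hC1 i m (Finset.mem_Icc.mpr hm))
            have hs := hsum (le_trans hm1 hm.2)
            linarith
          · have hmk : m = k := by omega
            subst hmk
            rw [if_pos hm2, if_neg hm1]
            linarith
        · rw [if_neg hm2, if_neg (by omega : ¬(k + 1 ≤ m))]
          have h0 := mem_Kexp_one (hC1 i m (Finset.mem_Icc.mpr hm))
          linarith
      · have hi' : ¬ i' = i := fun h => hi h.symm
        have : (∑ k' ∈ Finset.Icc 1 m, (q i' k' + (if i' = i ∧ k' = k then ε1 else 0) +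
            (if i' = i ∧ k' = k + 1 then ε2 else 0))) = ∑ k' ∈ Finset.Icc 1 m, q i' k' := by
          apply Finset.sum_congr rfl
          intro k' _
          simp [hi']
        rw [this]
        exact mem_Kexp_one (hC1 i' m (Finset.mem_Icc.mpr hm))
    · -- C2
      intro i' j hj k' hk'
      by_cases hi : i = i'
      · subst hi
        by_cases hkk : k' = k
        · subst hkk
          simp only [true_and, if_pos rfl, if_neg hkk1, add_zero]
          exact hC2k j hj
        · by_cases hkk' : k' = k + 1
          · subst hkk'
            simp only [true_and, if_neg hkk1.symm, if_pos rfl, add_zero, ↓reduceIte]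
            rw [Finset.mem_Icc] at hk'
            have h := hC2k1 hk'.2 j hj
            convert h using 2 <;> ring
          · simp only [true_and, if_neg hkk, if_neg hkk', add_zero]
            exact hC2 i j hj k' hk'
      · have hi' : ¬ i' = i := fun h => hi h.symm
        simp only [if_neg (by simp [hi'] : ¬(i' = i ∧ k' = k)),
          if_neg (by simp [hi'] : ¬(i' = i ∧ k' = k + 1)), add_zero]
        exact hC2 i' j hj k' hk'
  · -- objective
    have hinner : ∀ i' j,
        (∑ k' ∈ Finset.Icc 1 (P.K i'),
          (P.nu k' * (u i' j k' + (if i' = i ∧ k' = k then D1 j else 0) +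
            (if i' = i ∧ k' = k + 1 then D2 j else 0)) -
            P.nu k' * P.phi i' j k' * d i' j k')) =
        (∑ k' ∈ Finset.Icc 1 (P.K i'),
          (P.nu k' * u i' j k' - P.nu k' * P.phi i' j k' * d i' j k')) +
        (if i' = i then (P.nu k * D1 j +
          (if k + 1 ≤ P.K i then P.nu (k + 1) * D2 j else 0)) else 0) := by
      intro i' j
      by_cases hi : i = i'
      · subst hi
        rw [if_pos rfl]
        calc (∑ k' ∈ Finset.Icc 1 (P.K i),
              (P.nu k' * (u i j k' + (if i = i ∧ k' = k then D1 j else 0) +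
                (if i = i ∧ k' = k + 1 then D2 j else 0)) -
                P.nu k' * P.phi i j k' * d i j k'))
            = ∑ k' ∈ Finset.Icc 1 (P.K i),
              ((P.nu k' * u i j k' - P.nu k' * P.phi i j k' * d i j k') +
                (if k' = k then P.nu k' * D1 j else 0) +
                (if k' = k + 1 then P.nu k' * D2 j else 0)) := by
              apply Finset.sum_congr rfl
              intro k' _
              simp only [true_and, mul_ite, mul_zero]
              split_ifs <;> ring
          _ = (∑ k' ∈ Finset.Icc 1 (P.K i),
              (P.nu k' * u i j k' - P.nu k' * P.phi i j k' * d i j k')) +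
              (if k ∈ Finset.Icc 1 (P.K i) then P.nu k * D1 j else 0) +
              (if k + 1 ∈ Finset.Icc 1 (P.K i) then P.nu (k + 1) * D2 j else 0) := by
              rw [Finset.sum_add_distrib, Finset.sum_add_distrib,
                Finset.sum_ite_eq' (Finset.Icc 1 (P.K i)) k (fun k' => P.nu k' * D1 j),
                Finset.sum_ite_eq' (Finset.Icc 1 (P.K i)) (k + 1)
                  (fun k' => P.nu k' * D2 j)]
          _ = (∑ k' ∈ Finset.Icc 1 (P.K i),
              (P.nu k' * u i j k' - P.nu k' * P.phi i j k' * d i j k')) +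
              (P.nu k * D1 j + (if k + 1 ≤ P.K i then P.nu (k + 1) * D2 j else 0)) := by
              rw [if_pos (Finset.mem_Icc.mpr ⟨hk1, hkK⟩),
                if_congr (show (k + 1 ∈ Finset.Icc 1 (P.K i)) ↔ (k + 1 ≤ P.K i) by
                  simp [Finset.mem_Icc]) rfl rfl]
              ring
      · have hi' : ¬ i' = i := fun h => hi h.symm
        rw [if_neg hi', add_zero]
        apply Finset.sum_congr rfl
        intro k' _
        simp [hi']
    unfold objCP1
    rw [sub_eq_iff_eq_add]
    have hmain : (∑ i', ∑ j ∈ P.Iout i', ∑ k' ∈ Finset.Icc 1 (P.K i'),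
        (P.nu k' * (u i' j k' + (if i' = i ∧ k' = k then D1 j else 0) +
          (if i' = i ∧ k' = k + 1 then D2 j else 0)) -
          P.nu k' * P.phi i' j k' * d i' j k')) =
        (∑ i', ∑ j ∈ P.Iout i', ∑ k' ∈ Finset.Icc 1 (P.K i'),
          (P.nu k' * u i' j k' - P.nu k' * P.phi i' j k' * d i' j k')) +
        ∑ j ∈ P.Iout i, (P.nu k * D1 j +
          (if k + 1 ≤ P.K i then P.nu (k + 1) * D2 j else 0)) := by
      calc (∑ i', ∑ j ∈ P.Iout i', ∑ k' ∈ Finset.Icc 1 (P.K i'),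
            (P.nu k' * (u i' j k' + (if i' = i ∧ k' = k then D1 j else 0) +
              (if i' = i ∧ k' = k + 1 then D2 j else 0)) -
              P.nu k' * P.phi i' j k' * d i' j k'))
          = ∑ i', ∑ j ∈ P.Iout i',
            ((∑ k' ∈ Finset.Icc 1 (P.K i'),
              (P.nu k' * u i' j k' - P.nu k' * P.phi i' j k' * d i' j k')) +
              (if i' = i then (P.nu k * D1 j +
                (if k + 1 ≤ P.K i then P.nu (k + 1) * D2 j else 0)) else 0)) := by
            exact Finset.sum_congr rfl fun i' _ =>
              Finset.sum_congr rfl fun j _ => hinner i' j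
        _ = (∑ i', ∑ j ∈ P.Iout i', ∑ k' ∈ Finset.Icc 1 (P.K i'),
            (P.nu k' * u i' j k' - P.nu k' * P.phi i' j k' * d i' j k')) +
            ∑ i', (if i' = i then
              ∑ j ∈ P.Iout i', (P.nu k * D1 j +
                (if k + 1 ≤ P.K i then P.nu (k + 1) * D2 j else 0)) else 0) := by
            rw [← Finset.sum_add_distrib]
            apply Finset.sum_congr rfl
            intro i' _
            rw [Finset.sum_add_distrib]
            congr 1
            by_cases hi : i = i'
            · subst hi; simp
            · have hi' : ¬ i' = i := fun h => hi h.symm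
              simp [hi']
        _ = _ := by
            rw [Finset.sum_ite_eq' Finset.univ i
              (fun i' => ∑ j ∈ P.Iout i', (P.nu k * D1 j +
                (if k + 1 ≤ P.K i then P.nu (k + 1) * D2 j else 0)))]
            simp
    rw [hmain]
    ring


/-- Lemma 4: at an optimal solution of CP1 at which Conditions (iii) and (iv) hold for
every zone with positive idle-car mass, Condition (i) holds. -/
theorem CondIII_CondIV_imply_CondI {I : Type} [Fintype I] [DecidableEq I] (P : Params I)
    (a : I → ℝ) (d : I → I → ℕ → ℝ) (e f : I → I → ℝ)
    (u : I → I → ℕ → ℝ) (q : I → ℕ → ℝ)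
    (hopt : CP1Optimal P a d e f u q)
    (h34 : ∀ i : I, 0 < a i → CondIII P d q i ∧ CondIV P d q i) :
    CondI P a q := by
  obtain ⟨hfeas, hoptle⟩ := hopt
  obtain ⟨hsh, hqnn, hC1, hC2⟩ := hfeas
  intro i k hkIcc
  have hk := hkIcc
  rw [Finset.mem_Icc] at hk
  obtain ⟨hk1, hkK⟩ := hk
  have hubk : Real.exp (-(P.om * P.del k ^ 2 * a i / P.sigma i)) ≤
      1 - ∑ k' ∈ Finset.Icc 1 k, q i k' := mem_Kexp_one (hC1 i k hkIcc)
  by_cases ha : a i ≤ 0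
  · -- zero idle mass: the exponent vanishes
    have ha0 : a i = 0 := le_antisymm ha (hsh.1 i)
    have hc0 : P.om * P.del k ^ 2 * a i / P.sigma i = 0 := by rw [ha0]; ring
    have hge : 0 ≤ ∑ k' ∈ Finset.Icc 1 k, q i k' := by
      apply Finset.sum_nonneg
      intro k' hk'
      rw [Finset.mem_Icc] at hk'
      exact hqnn i k' (Finset.mem_Icc.mpr ⟨hk'.1, le_trans hk'.2 hkK⟩)
    rw [hc0] at hubk ⊢
    simp only [neg_zero, Real.exp_zero] at hubk ⊢
    linarith
  · push_neg at ha
    obtain ⟨hIII, hIV⟩ := h34 i ha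
    by_contra hne
    have hlt : ∑ k' ∈ Finset.Icc 1 k, q i k' <
        1 - Real.exp (-(P.om * P.del k ^ 2 * a i / P.sigma i)) :=
      lt_of_le_of_ne (by linarith) hne
    -- common facts
    have hsupK : P.K i ≤ Finset.univ.sup P.K := Finset.le_sup (Finset.mem_univ i)
    have hnuk : 0 < P.nu k := P.nu_pos k hk1 (le_trans hkK hsupK)
    have hq1pos : 0 < q i k := (hIII k hkIcc).1
    have hdk : ∀ j ∈ P.Iout i, 0 ≤ d i j k := fun j hj => hsh.2.1 i j hj k hkIcc
    have hX : ∀ j ∈ P.Iout i, 0 < P.lam i j * q i k - P.nu k * d i j k := by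
      intro j hj
      rcases (hdk j hj).eq_or_lt with h0 | h0
      · rw [← h0, mul_zero, sub_zero]
        exact mul_pos (P.lam_pos i j hj) hq1pos
      · exact (Kexp_fst_pos (hC2 i j hj k hkIcc) (by positivity)).1
    have hj0 : ∃ j ∈ P.Iout i, 0 < d i j k := by
      have h := (hIII k hkIcc).2
      exact Finset.exists_lt_of_sum_lt (f := fun _ => (0:ℝ)) (by simpa using h)
    obtain ⟨j0, hj0mem, hj0pos⟩ := hj0
    by_cases hcase : k + 1 ≤ P.K i
    · -- main case: transfer mass from level k+1 to level k
      have hk1Icc : k + 1 ∈ Finset.Icc 1 (P.K i) := Finset.mem_Icc.mpr ⟨by omega, hcase⟩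
      have hnuk1 : 0 < P.nu (k + 1) := P.nu_pos (k + 1) (by omega) (le_trans hcase hsupK)
      have hq2pos : 0 < q i (k + 1) := (hIII (k + 1) hk1Icc).1
      have hdk1 : ∀ j ∈ P.Iout i, 0 ≤ d i j (k + 1) := fun j hj => hsh.2.1 i j hj (k + 1) hk1Icc
      have hY : ∀ j ∈ P.Iout i,
          0 < P.lam i j * q i (k + 1) - P.nu (k + 1) * d i j (k + 1) := by
        intro j hj
        rcases (hdk1 j hj).eq_or_lt with h0 | h0
        · rw [← h0, mul_zero, sub_zero]
          exact mul_pos (P.lam_pos i j hj) hq2pos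
        · exact (Kexp_fst_pos (hC2 i j hj (k + 1) hk1Icc) (by positivity)).1
      -- gain and curvature sums
      have htermnn : ∀ j ∈ P.Iout i, 0 ≤
          P.lam i j * (P.nu k * d i j k /
            (P.beta i j * (P.lam i j * q i k - P.nu k * d i j k)) -
            P.nu (k + 1) * d i j (k + 1) /
            (P.beta i j * (P.lam i j * q i (k + 1) - P.nu (k + 1) * d i j (k + 1)))) := by
        intro j hj
        rcases hIV j hj with ⟨hchain, _⟩ | hz
        · exact le_of_lt (term_pos (P.lam_pos i j hj) (P.beta_pos i j hj) (hX j hj) (hY j hj)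
            (mul_nonneg hnuk1.le (hdk1 j hj)) (hchain k hk1 hcase)
            (mul_pos (P.lam_pos i j hj) hq1pos) (mul_pos (P.lam_pos i j hj) hq2pos))
        · rw [hz k hkIcc, hz (k + 1) hk1Icc]
          simp
      have htermpos : 0 < P.lam i j0 * (P.nu k * d i j0 k /
            (P.beta i j0 * (P.lam i j0 * q i k - P.nu k * d i j0 k)) -
            P.nu (k + 1) * d i j0 (k + 1) /
            (P.beta i j0 * (P.lam i j0 * q i (k + 1) - P.nu (k + 1) * d i j0 (k + 1)))) := by
        rcases hIV j0 hj0mem with ⟨hchain, _⟩ | hz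
        · exact term_pos (P.lam_pos i j0 hj0mem) (P.beta_pos i j0 hj0mem) (hX j0 hj0mem)
            (hY j0 hj0mem) (mul_nonneg hnuk1.le (hdk1 j0 hj0mem)) (hchain k hk1 hcase)
            (mul_pos (P.lam_pos i j0 hj0mem) hq1pos) (mul_pos (P.lam_pos i j0 hj0mem) hq2pos)
        · exact absurd (hz k hkIcc) (ne_of_gt hj0pos)
      have hG : 0 < ∑ j ∈ P.Iout i, P.lam i j * (P.nu k * d i j k /
            (P.beta i j * (P.lam i j * q i k - P.nu k * d i j k)) -
            P.nu (k + 1) * d i j (k + 1) /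
            (P.beta i j * (P.lam i j * q i (k + 1) - P.nu (k + 1) * d i j (k + 1)))) :=
        Finset.sum_pos' htermnn ⟨j0, hj0mem, htermpos⟩
      have hCC : 0 ≤ ∑ j ∈ P.Iout i, P.lam i j ^ 2 * (P.nu k * d i j k /
            (P.beta i j * (P.lam i j * q i k - P.nu k * d i j k) ^ 2) +
            2 * P.nu (k + 1) * d i j (k + 1) /
            (P.beta i j * (P.lam i j * q i (k + 1) - P.nu (k + 1) * d i j (k + 1)) ^ 2)) := by
        apply Finset.sum_nonneg
        intro j hj
        have h1 := hdk j hj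
        have h2 := hdk1 j hj
        have h3 := (P.beta_pos i j hj).le
        have h4 := hnuk.le
        have h5 := hnuk1.le
        positivity
      have hne' : (P.Iout i).Nonempty := ⟨j0, hj0mem⟩
      have hM : 0 < (P.Iout i).inf' hne' (fun j =>
          (P.lam i j * q i (k + 1) - P.nu (k + 1) * d i j (k + 1)) / (2 * P.lam i j)) := by
        rw [Finset.lt_inf'_iff]
        intro j hj
        exact div_pos (hY j hj) (by linarith [P.lam_pos i j hj])
      set G := ∑ j ∈ P.Iout i, P.lam i j * (P.nu k * d i j k /
            (P.beta i j * (P.lam i j * q i k - P.nu k * d i j k)) -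
            P.nu (k + 1) * d i j (k + 1) /
            (P.beta i j * (P.lam i j * q i (k + 1) - P.nu (k + 1) * d i j (k + 1)))) with hGdef
      set CC := ∑ j ∈ P.Iout i, P.lam i j ^ 2 * (P.nu k * d i j k /
            (P.beta i j * (P.lam i j * q i k - P.nu k * d i j k) ^ 2) +
            2 * P.nu (k + 1) * d i j (k + 1) /
            (P.beta i j * (P.lam i j * q i (k + 1) - P.nu (k + 1) * d i j (k + 1)) ^ 2)) with hCCdef
      set ε := min (1 - Real.exp (-(P.om * P.del k ^ 2 * a i / P.sigma i)) -
          ∑ k' ∈ Finset.Icc 1 k, q i k')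
        (min (q i (k + 1) / 2) (min (G / (CC + 1)) ((P.Iout i).inf' hne' (fun j =>
          (P.lam i j * q i (k + 1) - P.nu (k + 1) * d i j (k + 1)) / (2 * P.lam i j))))) with hεdef
      have hε : 0 < ε := by
        apply lt_min (by linarith)
        exact lt_min (by linarith) (lt_min (div_pos hG (by linarith)) hM)
      have hεslack : ε ≤ 1 - Real.exp (-(P.om * P.del k ^ 2 * a i / P.sigma i)) -
          ∑ k' ∈ Finset.Icc 1 k, q i k' := min_le_left _ _
      have hεq2 : ε ≤ q i (k + 1) / 2 := le_trans (min_le_right _ _) (min_le_left _ _)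
      have hεG : ε ≤ G / (CC + 1) :=
        le_trans (min_le_right _ _) (le_trans (min_le_right _ _) (min_le_left _ _))
      have hεM : ∀ j ∈ P.Iout i, P.lam i j * ε ≤
          (P.lam i j * q i (k + 1) - P.nu (k + 1) * d i j (k + 1)) / 2 := by
        intro j hj
        have h1 : ε ≤ (P.lam i j * q i (k + 1) - P.nu (k + 1) * d i j (k + 1)) /
            (2 * P.lam i j) :=
          le_trans (min_le_right _ _) (le_trans (min_le_right _ _)
            (le_trans (min_le_right _ _) (Finset.inf'_le _ hj)))
        have hlam := P.lam_pos i j hj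
        rw [le_div_iff₀ (by linarith)] at h1
        have h2 : ε * (2 * P.lam i j) = 2 * (P.lam i j * ε) := by ring
        linarith
      have happ := perturb_feasible P a d e f u q ⟨hsh, hqnn, hC1, hC2⟩ i k hkIcc ε (-ε)
        (fun j => d i j k / P.beta i j *
          (Real.log (P.lam i j * (q i k + ε) - P.nu k * d i j k) -
            Real.log (P.lam i j * q i k - P.nu k * d i j k)))
        (fun j => d i j (k + 1) / P.beta i j *
          (Real.log (P.lam i j * (q i (k + 1) + -ε) - P.nu (k + 1) * d i j (k + 1)) -
            Real.log (P.lam i j * q i (k + 1) - P.nu (k + 1) * d i j (k + 1))))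
        (by linarith)
        (fun _ => by linarith)
        (fun _ => by ring)
        (by linarith)
        (by
          intro j hj
          apply C2_perturb (P.beta_pos i j hj) hnuk (hdk j hj) (hC2 i j hj k hkIcc)
          have h1 := hX j hj
          have hlam := P.lam_pos i j hj
          have h2 : P.lam i j * (q i k + ε) - P.nu k * d i j k =
              (P.lam i j * q i k - P.nu k * d i j k) + P.lam i j * ε := by ring
          rw [h2]
          have := mul_pos hlam hε
          linarith)
        (by
          intro _ j hj
          apply C2_perturb (P.beta_pos i j hj) hnuk1 (hdk1 j hj) (hC2 i j hj (k + 1) hk1Icc)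
          have h1 := hY j hj
          have h2 := hεM j hj
          have h3 : P.lam i j * (q i (k + 1) + -ε) - P.nu (k + 1) * d i j (k + 1) =
              (P.lam i j * q i (k + 1) - P.nu (k + 1) * d i j (k + 1)) - P.lam i j * ε := by ring
          rw [h3]
          linarith)
      obtain ⟨hfeas', hobj⟩ := happ
      have hle := hoptle a d e f _ _ hfeas'
      rw [hobj] at hle
      have hsumlb : ε * G - ε ^ 2 * CC ≤ ∑ j ∈ P.Iout i,
          (P.nu k * (d i j k / P.beta i j *
            (Real.log (P.lam i j * (q i k + ε) - P.nu k * d i j k) -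
              Real.log (P.lam i j * q i k - P.nu k * d i j k))) +
            (if k + 1 ≤ P.K i then P.nu (k + 1) * (d i j (k + 1) / P.beta i j *
              (Real.log (P.lam i j * (q i (k + 1) + -ε) - P.nu (k + 1) * d i j (k + 1)) -
                Real.log (P.lam i j * q i (k + 1) - P.nu (k + 1) * d i j (k + 1)))) else 0)) := by
        simp only [if_pos hcase]
        rw [hGdef, hCCdef, Finset.mul_sum, Finset.mul_sum, ← Finset.sum_sub_distrib]
        apply Finset.sum_le_sum
        intro j hj
        exact perj (P.lam_pos i j hj) (P.beta_pos i j hj) hnuk hnuk1 (hdk j hj) (hdk1 j hj)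
          (hX j hj) (hY j hj) hε.le (hεM j hj)
      have hfinal : 0 < ε * G - ε ^ 2 * CC := by
        rw [le_div_iff₀ (by linarith : (0:ℝ) < CC + 1)] at hεG
        nlinarith [mul_le_mul_of_nonneg_left hεG hε.le]
      linarith
    · -- boundary case k = K i: simply raise q i k
      set ε := 1 - Real.exp (-(P.om * P.del k ^ 2 * a i / P.sigma i)) -
        ∑ k' ∈ Finset.Icc 1 k, q i k' with hεdef
      have hε : 0 < ε := by rw [hεdef]; linarith
      have happ := perturb_feasible P a d e f u q ⟨hsh, hqnn, hC1, hC2⟩ i k hkIcc ε 0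
        (fun j => d i j k / P.beta i j *
          (Real.log (P.lam i j * (q i k + ε) - P.nu k * d i j k) -
            Real.log (P.lam i j * q i k - P.nu k * d i j k)))
        (fun _ => 0)
        (by linarith)
        (fun h => absurd h hcase)
        (fun h => absurd h hcase)
        (by rw [hεdef]; linarith)
        (by
          intro j hj
          apply C2_perturb (P.beta_pos i j hj) hnuk (hdk j hj) (hC2 i j hj k hkIcc)
          have h1 := hX j hj
          have hlam := P.lam_pos i j hj
          have h2 : P.lam i j * (q i k + ε) - P.nu k * d i j k =
              (P.lam i j * q i k - P.nu k * d i j k) + P.lam i j * ε := by ring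
          rw [h2]
          have := mul_pos hlam hε
          linarith)
        (fun h => absurd h hcase)
      obtain ⟨hfeas', hobj⟩ := happ
      have hle := hoptle a d e f _ _ hfeas'
      rw [hobj] at hle
      have hsumpos : 0 < ∑ j ∈ P.Iout i,
          (P.nu k * (d i j k / P.beta i j *
            (Real.log (P.lam i j * (q i k + ε) - P.nu k * d i j k) -
              Real.log (P.lam i j * q i k - P.nu k * d i j k))) +
            (if k + 1 ≤ P.K i then P.nu (k + 1) * ((fun _ => (0:ℝ)) j) else 0)) := by
        simp only [if_neg hcase, add_zero]
        apply Finset.sum_pos'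
        · intro j hj
          have h1 := hX j hj
          have hlam := P.lam_pos i j hj
          have hlog : Real.log (P.lam i j * q i k - P.nu k * d i j k) ≤
              Real.log (P.lam i j * (q i k + ε) - P.nu k * d i j k) := by
            apply Real.log_le_log h1
            nlinarith [mul_pos hlam hε]
          have hd := hdk j hj
          have hb := (P.beta_pos i j hj).le
          exact mul_nonneg hnuk.le (mul_nonneg (div_nonneg hd hb) (sub_nonneg.mpr hlog))
        · refine ⟨j0, hj0mem, ?_⟩
          have h1 := hX j0 hj0mem
          have hlam := P.lam_pos i j0 hj0mem
          have hlog : Real.log (P.lam i j0 * q i k - P.nu k * d i j0 k) <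
              Real.log (P.lam i j0 * (q i k + ε) - P.nu k * d i j0 k) := by
            apply Real.log_lt_log h1
            nlinarith [mul_pos hlam hε]
          have hb := P.beta_pos i j0 hj0mem
          apply mul_pos hnuk
          apply mul_pos (div_pos hj0pos hb)
          linarith
      linarith


end
end

section
/- At every optimal solution (ā*, ē*, f̄*, u*, q*) of problem CP2, for each (i,j)∈IJ the following dichotomy holds: either (f̄*_{ij}=0 and u*_{ij}=0), or (f̄*_{ij}>0 and μ_{ij} f̄*_{ij}·log(μ_{ij} f̄*_{ij}/(λ_{ij} q*_i − μ_{ij} f̄*_{ij})) = α_{ij0} μ_{ij} f̄*_{ij} − β_{ij} μ_{ij} u*_{ij}). -/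
open Finset

noncomputable section

/-- Network primitives and parameter assumptions for the ride-hailing model without
en-route time, underlying problems FP2 and CP2. -/
structure Params2 (I : Type) [Fintype I] [DecidableEq I] where
  nonemptyI : Nonempty I
  /-- destination zones reachable with a passenger: `j ∈ Iout i ↔ (i,j) ∈ IJ` -/
  Iout : I → Finset I
  /-- destination zones reachable empty: `j ∈ Itil i ↔ (i,j) ∈ ĨJ` -/
  Itil : I → Finset I
  IJ_nonempty : ∃ i j, j ∈ Iout i
  connected : ∀ i j : I, ∃ (n : ℕ) (c : ℕ → I),
    c 0 = i ∧ c n = j ∧ ∀ m, m < n → c (m + 1) ∈ Itil (c m)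
  lam : I → I → ℝ
  mu : I → I → ℝ
  mutil : I → I → ℝ
  beta : I → I → ℝ
  /-- `alpha i j` is the parameter `α_{ij0}` -/
  alpha : I → I → ℝ
  /-- `phi i j` is the cost `φ_{ij0}` -/
  phi : I → I → ℝ
  psi : I → I → ℝ
  lam_pos : ∀ i j, j ∈ Iout i → 0 < lam i j
  mu_pos : ∀ i j, j ∈ Iout i → 0 < mu i j
  mutil_pos : ∀ i j, j ∈ Itil i → 0 < mutil i j
  beta_pos : ∀ i j, j ∈ Iout i → 0 < beta i j

variable {I : Type} [Fintype I] [DecidableEq I]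

/-- Sign restrictions and constraints (G4), (G5), shared by FP2 and CP2. -/
def Shared2 (P : Params2 I) (a : I → ℝ) (e f : I → I → ℝ) (q : I → ℝ) : Prop :=
  (∀ i, 0 ≤ a i) ∧
  (∀ i j, j ∈ P.Itil i → 0 ≤ e i j) ∧
  (∀ i j, j ∈ P.Iout i → 0 ≤ f i j) ∧
  (∀ i, 0 ≤ q i ∧ q i ≤ 1) ∧
  -- (G4)
  (∀ i : I,
    (∑ j ∈ Finset.univ.filter (fun j => i ∈ P.Itil j), P.mutil j i * e j i) +
    (∑ j ∈ Finset.univ.filter (fun j => i ∈ P.Iout j), P.mu j i * f j i) =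
    (∑ j ∈ P.Itil i, P.mutil i j * e i j) +
    (∑ j ∈ P.Iout i, P.mu i j * f i j)) ∧
  -- (G5)
  ((∑ i, a i) + (∑ i, ∑ j ∈ P.Itil i, e i j) +
    (∑ i, ∑ j ∈ P.Iout i, f i j) = 1)

/-- Feasibility for problem FP2. -/
def FP2Feasible (P : Params2 I) (a : I → ℝ) (e f : I → I → ℝ)
    (x p : I → I → ℝ) (q : I → ℝ) : Prop :=
  Shared2 P a e f q ∧
  -- (G1)
  (∀ i, (1 - q i) * a i = 0) ∧
  -- (G2)
  (∀ i j, j ∈ P.Iout i →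
    p i j = Real.exp (P.alpha i j - P.beta i j * x i j) /
      (1 + Real.exp (P.alpha i j - P.beta i j * x i j))) ∧
  -- (G3)
  (∀ i j, j ∈ P.Iout i → P.lam i j * q i * p i j = P.mu i j * f i j)

/-- Feasibility for problem CP2. -/
def CP2Feasible (P : Params2 I) (a : I → ℝ) (e f : I → I → ℝ)
    (u : I → I → ℝ) (q : I → ℝ) : Prop :=
  Shared2 P a e f q ∧
  -- (H1)
  (∀ i j, j ∈ P.Iout i →
    ((P.lam i j * q i - P.mu i j * f i j, P.mu i j * f i j,
      P.beta i j * P.mu i j * u i j - P.alpha i j * P.mu i j * f i j) :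
      ℝ × ℝ × ℝ) ∈ Kexp)

/-- The FP2 objective Φ_FP2. -/
def objFP2 (P : Params2 I) (e f x : I → I → ℝ) : ℝ :=
  (∑ i, ∑ j ∈ P.Iout i, P.mu i j * f i j * (x i j - P.phi i j)) -
  ∑ i, ∑ j ∈ P.Itil i, P.psi i j * P.mutil i j * e i j

/-- The CP2 objective Φ_CP2. -/
def objCP2 (P : Params2 I) (e f u : I → I → ℝ) : ℝ :=
  (∑ i, ∑ j ∈ P.Iout i, (P.mu i j * u i j - P.mu i j * P.phi i j * f i j)) -
  ∑ i, ∑ j ∈ P.Itil i, P.psi i j * P.mutil i j * e i j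

/-- Optimality for problem CP2. -/
def CP2Optimal (P : Params2 I) (a : I → ℝ) (e f u : I → I → ℝ) (q : I → ℝ) : Prop :=
  CP2Feasible P a e f u q ∧
  ∀ a' e' f' u' q', CP2Feasible P a' e' f' u' q' →
    objCP2 P e' f' u' ≤ objCP2 P e f u

/-- Optimality for problem FP2. -/
def FP2Optimal (P : Params2 I) (a : I → ℝ) (e f x p : I → I → ℝ) (q : I → ℝ) : Prop :=
  FP2Feasible P a e f x p q ∧
  ∀ a' e' f' x' p' q', FP2Feasible P a' e' f' x' p' q' →
    objFP2 P e' f' x' ≤ objFP2 P e f x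


/-- At every optimal solution of CP2 and every `(i,j) ∈ IJ`: either `f̄*_{ij} = 0` and
`u*_{ij} = 0`, or `f̄*_{ij} > 0` and the logit-logarithm equation holds. -/
theorem CP2_optimal_dichotomy {I : Type} [Fintype I] [DecidableEq I] (P : Params2 I)
    (a : I → ℝ) (e f u : I → I → ℝ) (q : I → ℝ)
    (hopt : CP2Optimal P a e f u q) :
    ∀ i j, j ∈ P.Iout i →
      (f i j = 0 ∧ u i j = 0) ∨
      (0 < f i j ∧
        P.mu i j * f i j *
          Real.log (P.mu i j * f i j / (P.lam i j * q i - P.mu i j * f i j)) =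
        P.alpha i j * P.mu i j * f i j - P.beta i j * P.mu i j * u i j) := by
  intro i j hj
  have hmu : 0 < P.mu i j := P.mu_pos i j hj
  have hbeta : 0 < P.beta i j := P.beta_pos i j hj
  have hlam : 0 < P.lam i j := P.lam_pos i j hj
  have hqpos : 0 ≤ q i := (hopt.1.1.2.2.2.1 i).1
  have hfnn : 0 ≤ f i j := hopt.1.1.2.2.1 i j hj
  -- key: any u-value at (i,j) satisfying (H1) is at most u i j
  have key : ∀ t : ℝ,
      ((P.lam i j * q i - P.mu i j * f i j, P.mu i j * f i j,
        P.beta i j * P.mu i j * t - P.alpha i j * P.mu i j * f i j) :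
        ℝ × ℝ × ℝ) ∈ Kexp → t ≤ u i j := by
    intro t ht
    set u' : I → I → ℝ := fun i' j' => if i' = i ∧ j' = j then t else u i' j' with hu'
    have hfeas : CP2Feasible P a e f u' q := by
      refine ⟨hopt.1.1, ?_⟩
      intro i' j' hj'
      by_cases hc : i' = i ∧ j' = j
      · obtain ⟨rfl, rfl⟩ := hc
        simpa [u'] using ht
      · have hval : u' i' j' = u i' j' := by simp [u', hc]
        rw [hval]; exact hopt.1.2 i' j' hj'
    have hobj := hopt.2 a e f u' q hfeas
    unfold objCP2 at hobj
    have hdiff : ∀ i' : I,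
        (∑ j' ∈ P.Iout i', (P.mu i' j' * u' i' j' - P.mu i' j' * P.phi i' j' * f i' j')) =
        (∑ j' ∈ P.Iout i', (P.mu i' j' * u i' j' - P.mu i' j' * P.phi i' j' * f i' j')) +
        (if i' = i then P.mu i j * (t - u i j) else 0) := by
      intro i'
      by_cases hc : i' = i
      · subst hc
        rw [if_pos rfl]
        have hterm : ∀ j' ∈ P.Iout i',
            (P.mu i' j' * u' i' j' - P.mu i' j' * P.phi i' j' * f i' j') =
            (P.mu i' j' * u i' j' - P.mu i' j' * P.phi i' j' * f i' j') +
            (if j' = j then P.mu i' j * (t - u i' j) else 0) := by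
          intro j' _
          by_cases hcc : j' = j
          · subst hcc
            simp [u']; ring
          · simp [u', hcc]
        rw [Finset.sum_congr rfl hterm, Finset.sum_add_distrib,
          Finset.sum_ite_eq' (P.Iout i') j, if_pos hj]
      · rw [if_neg hc, add_zero]
        refine Finset.sum_congr rfl fun j' _ => ?_
        have : u' i' j' = u i' j' := by simp [u', hc]
        rw [this]
    rw [Finset.sum_congr rfl (fun i' _ => hdiff i'), Finset.sum_add_distrib,
      Finset.sum_ite_eq' Finset.univ i, if_pos (Finset.mem_univ i)] at hobj
    nlinarith [hmu]
  rcases hopt.1.2 i j hj with hpos | hzero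
  · -- positive branch
    simp only [Set.mem_setOf_eq] at hpos
    right
    have hf : 0 < f i j := by nlinarith [hpos.2.1]
    refine ⟨hf, ?_⟩
    have hle := hpos.2.2
    have hge : P.mu i j * f i j *
        Real.log ((P.lam i j * q i - P.mu i j * f i j) / (P.mu i j * f i j)) ≤
        P.beta i j * P.mu i j * u i j - P.alpha i j * P.mu i j * f i j := by
      by_contra h
      push_neg at h
      set L := P.mu i j * f i j *
        Real.log ((P.lam i j * q i - P.mu i j * f i j) / (P.mu i j * f i j)) with hL
      set t := (L + P.alpha i j * P.mu i j * f i j) / (P.beta i j * P.mu i j) with htdef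
      have hbm : P.beta i j * P.mu i j ≠ 0 := ne_of_gt (mul_pos hbeta hmu)
      have ht : P.beta i j * P.mu i j * t - P.alpha i j * P.mu i j * f i j = L := by
        rw [htdef, mul_div_assoc', mul_div_right_comm, div_self hbm, one_mul]
        ring
      have hkey := key t (Or.inl ⟨hpos.1, hpos.2.1, by rw [ht]⟩)
      nlinarith [mul_pos hbeta hmu]
    have heq : P.beta i j * P.mu i j * u i j - P.alpha i j * P.mu i j * f i j =
        P.mu i j * f i j *
        Real.log ((P.lam i j * q i - P.mu i j * f i j) / (P.mu i j * f i j)) :=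
      le_antisymm hle hge
    have hlog : Real.log (P.mu i j * f i j / (P.lam i j * q i - P.mu i j * f i j)) =
        - Real.log ((P.lam i j * q i - P.mu i j * f i j) / (P.mu i j * f i j)) := by
      rw [← Real.log_inv]
      congr 1
      rw [inv_div]
    rw [hlog]
    linarith [heq, (by ring : P.mu i j * f i j *
      -Real.log ((P.lam i j * q i - P.mu i j * f i j) / (P.mu i j * f i j)) =
      -(P.mu i j * f i j *
        Real.log ((P.lam i j * q i - P.mu i j * f i j) / (P.mu i j * f i j))))]
  · -- zero branch
    simp only [Set.mem_setOf_eq] at hzero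
    left
    have hf0 : f i j = 0 := by
      rcases mul_eq_zero.mp hzero.2.1 with h | h
      · exact absurd h (ne_of_gt hmu)
      · exact h
    refine ⟨hf0, ?_⟩
    have halpha : P.alpha i j * P.mu i j * f i j = 0 := by rw [hf0]; ring
    have hu_le : u i j ≤ 0 := by
      have h3 := hzero.2.2
      nlinarith [mul_pos hbeta hmu]
    have hu_ge : 0 ≤ u i j := by
      apply key 0
      refine Or.inr ⟨?_, hzero.2.1, ?_⟩
      · simp only []
        rw [hf0]
        have : 0 ≤ P.lam i j * q i := mul_nonneg hlam.le hqpos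
        simpa using this
      · simp only []
        rw [hf0]; ring_nf; simp
    exact le_antisymm hu_le hu_ge

end
end

section
/- There exists a feasible point of problem CP2 whose objective value Φ_CP2 is strictly positive; consequently, every optimal solution of CP2 has strictly positive objective value. -/
open Finset

noncomputable section

variable {I : Type} [Fintype I] [DecidableEq I]

lemma exists_small_t (lam beta alpha phi Psi C : ℝ) (hlam : 0 < lam) (hC : 0 ≤ C) :
    ∃ t : ℝ, 0 < t ∧ t ≤ lam / 2 ∧ t * C ≤ 1 ∧
      beta * (phi + Psi) - alpha < Real.log ((lam - t) / t) := by
  set D := max (beta * (phi + Psi) - alpha) 0 with hD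
  have hD0 : 0 ≤ D := le_max_right _ _
  set t := min (lam / 2 * Real.exp (-(D + 1))) (1 / (C + 1)) with ht
  have ht0 : 0 < t := lt_min (by positivity) (by positivity)
  have ht1 : t ≤ lam / 2 * Real.exp (-(D + 1)) := min_le_left _ _
  have ht2 : t ≤ 1 / (C + 1) := min_le_right _ _
  have htlam : t ≤ lam / 2 := by
    have he1 : Real.exp (-(D + 1)) ≤ 1 := Real.exp_le_one_iff.mpr (by linarith)
    nlinarith
  have hquot : 0 < (lam - t) / t := div_pos (by linarith) ht0
  refine ⟨t, ht0, htlam, ?_, ?_⟩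
  · have h1 : t * (C + 1) ≤ 1 := by
      have h2 := mul_le_mul_of_nonneg_right ht2 (by linarith : (0:ℝ) ≤ C + 1)
      rwa [one_div, inv_mul_cancel₀ (by linarith : C + 1 ≠ 0)] at h2
    nlinarith
  · have hLge : D + 1 ≤ Real.log ((lam - t) / t) := by
      rw [Real.le_log_iff_exp_le hquot, le_div_iff₀ ht0]
      have hE : 0 < Real.exp (D + 1) := Real.exp_pos _
      have h2 := mul_le_mul_of_nonneg_right ht1 hE.le
      rw [mul_assoc, ← Real.exp_add] at h2
      simp only [neg_add_cancel, Real.exp_zero, mul_one] at h2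
      nlinarith
    have h3 := le_max_left (beta * (phi + Psi) - alpha) (0:ℝ)
    linarith

/-- There is a feasible point of CP2 with strictly positive objective value; consequently,
every optimal solution of CP2 has strictly positive objective value. -/
theorem CP2_positive_value {I : Type} [Fintype I] [DecidableEq I] (P : Params2 I) :
    (∃ (a : I → ℝ) (e f u : I → I → ℝ) (q : I → ℝ),
      CP2Feasible P a e f u q ∧ 0 < objCP2 P e f u) ∧
    (∀ (a : I → ℝ) (e f u : I → I → ℝ) (q : I → ℝ),
      CP2Optimal P a e f u q → 0 < objCP2 P e f u) := by
  classical
  have main : ∃ (a : I → ℝ) (e f u : I → I → ℝ) (q : I → ℝ),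
      CP2Feasible P a e f u q ∧ 0 < objCP2 P e f u := by
    obtain ⟨i₀, j₀, hj₀⟩ := P.IJ_nonempty
    obtain ⟨n, c, hc0, hcn, hstep⟩ := P.connected j₀ i₀
    have hμ0 : 0 < P.mu i₀ j₀ := P.mu_pos _ _ hj₀
    have hlam0 : 0 < P.lam i₀ j₀ := P.lam_pos _ _ hj₀
    have hβ0 : 0 < P.beta i₀ j₀ := P.beta_pos _ _ hj₀
    set N : I → I → ℕ := fun i j =>
      ((Finset.range n).filter (fun m => c m = i ∧ c (m+1) = j)).card with hN
    have hNcast : ∀ i j, (N i j : ℝ) =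
        ∑ m ∈ Finset.range n, (if c m = i ∧ c (m+1) = j then (1:ℝ) else 0) := by
      intro i j
      simp only [hN]
      rw [Finset.card_filter]
      push_cast
      rfl
    set K : ℝ := ∑ i, ∑ j ∈ P.Itil i, (N i j : ℝ) / P.mutil i j with hKdef
    set Ψ : ℝ := ∑ i, ∑ j ∈ P.Itil i, P.psi i j * (N i j : ℝ) with hΨdef
    set C : ℝ := 1 / P.mu i₀ j₀ + K with hCdef
    have hK0 : 0 ≤ K := by
      apply Finset.sum_nonneg; intro i _
      apply Finset.sum_nonneg; intro j hj
      exact div_nonneg (Nat.cast_nonneg _) (P.mutil_pos i j hj).le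
    have hC0 : 0 < C := by
      have h4 : 0 < 1 / P.mu i₀ j₀ := by positivity
      rw [hCdef]; linarith
    obtain ⟨t, ht0, htlam, htC, hL⟩ := exists_small_t (P.lam i₀ j₀) (P.beta i₀ j₀)
      (P.alpha i₀ j₀) (P.phi i₀ j₀) Ψ C hlam0 hC0.le
    have hlamt : 0 < P.lam i₀ j₀ - t := by linarith
    set L : ℝ := Real.log ((P.lam i₀ j₀ - t) / t) with hLdef
    -- the witness
    set a : I → ℝ := fun i => if i = i₀ then 1 - t * C else 0 with ha
    set e : I → I → ℝ := fun i j => t * ((N i j : ℝ) / P.mutil i j) with he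
    set f : I → I → ℝ := fun i j => if i = i₀ ∧ j = j₀ then t / P.mu i₀ j₀ else 0 with hf
    set u : I → I → ℝ := fun i j =>
      if i = i₀ ∧ j = j₀ then
        t / (P.beta i₀ j₀ * P.mu i₀ j₀) * (P.alpha i₀ j₀ + L) else 0 with hu
    set q : I → ℝ := fun _ => 1 with hq
    -- counting identities
    have hOut : ∀ v, ∑ j ∈ P.Itil v, (N v j : ℝ) =
        ∑ m ∈ Finset.range n, (if c m = v then (1:ℝ) else 0) := by
      intro v
      rw [Finset.sum_congr rfl (fun j _ => hNcast v j), Finset.sum_comm]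
      refine Finset.sum_congr rfl fun m hm => ?_
      have hmn : m < n := Finset.mem_range.mp hm
      by_cases hcv : c m = v
      · simp only [hcv, true_and]
        rw [Finset.sum_ite_eq]
        simp [hcv ▸ hstep m hmn]
      · simp [hcv]
    have hIn : ∀ v, ∑ j ∈ Finset.univ.filter (fun j => v ∈ P.Itil j), (N j v : ℝ) =
        ∑ m ∈ Finset.range n, (if c (m+1) = v then (1:ℝ) else 0) := by
      intro v
      rw [Finset.sum_congr rfl (fun j _ => hNcast j v), Finset.sum_comm]
      refine Finset.sum_congr rfl fun m hm => ?_
      have hmn : m < n := Finset.mem_range.mp hm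
      by_cases hcv : c (m+1) = v
      · simp only [hcv, and_true]
        rw [Finset.sum_ite_eq]
        have hmem : c m ∈ Finset.univ.filter (fun j => v ∈ P.Itil j) := by
          simp [Finset.mem_filter, hcv ▸ hstep m hmn]
        simp [hmem]
      · simp [hcv]
    have hTel : ∀ v, (∑ m ∈ Finset.range n, (if c (m+1) = v then (1:ℝ) else 0)) +
        (if c 0 = v then (1:ℝ) else 0) =
        (∑ m ∈ Finset.range n, (if c m = v then (1:ℝ) else 0)) +
        (if c n = v then (1:ℝ) else 0) := by
      intro v
      have h1 := Finset.sum_range_succ (fun m => if c m = v then (1:ℝ) else 0) n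
      have h2 := Finset.sum_range_succ' (fun m => if c m = v then (1:ℝ) else 0) n
      rw [h1] at h2
      linarith [h2]
    refine ⟨a, e, f, u, q, ⟨⟨?_, ?_, ?_, ?_, ?_, ?_⟩, ?_⟩, ?_⟩
    · -- a nonneg
      intro i
      simp only [ha]
      split
      · linarith
      · exact le_refl 0
    · -- e nonneg
      intro i j hj
      simp only [he]
      exact mul_nonneg ht0.le (div_nonneg (Nat.cast_nonneg _) (P.mutil_pos i j hj).le)
    · -- f nonneg
      intro i j hj
      simp only [hf]
      split
      · positivity
      · exact le_refl 0
    · -- q in [0,1]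
      intro i
      simp only [hq]
      exact ⟨zero_le_one, le_refl 1⟩
    · -- (G4)
      intro v
      have hEin : ∑ j ∈ Finset.univ.filter (fun j => v ∈ P.Itil j), P.mutil j v * e j v =
          t * ∑ m ∈ Finset.range n, (if c (m+1) = v then (1:ℝ) else 0) := by
        rw [← hIn v, Finset.mul_sum]
        refine Finset.sum_congr rfl fun j hj => ?_
        have hm := P.mutil_pos j v (Finset.mem_filter.mp hj).2
        simp only [he]
        field_simp
      have hEout : ∑ j ∈ P.Itil v, P.mutil v j * e v j =
          t * ∑ m ∈ Finset.range n, (if c m = v then (1:ℝ) else 0) := by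
        rw [← hOut v, Finset.mul_sum]
        refine Finset.sum_congr rfl fun j hj => ?_
        have hm := P.mutil_pos v j hj
        simp only [he]
        field_simp
      have hFin : ∑ j ∈ Finset.univ.filter (fun j => v ∈ P.Iout j), P.mu j v * f j v =
          if j₀ = v then t else 0 := by
        by_cases hv : j₀ = v
        · subst hv
          rw [if_pos rfl, Finset.sum_eq_single i₀]
          · simp only [hf, and_self, if_true]
            exact mul_div_cancel₀ t hμ0.ne'
          · intro b _ hb
            simp [hf, hb]
          · intro hmem
            exact absurd (by simp [Finset.mem_filter, hj₀]) hmem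
        · rw [if_neg hv]
          apply Finset.sum_eq_zero
          intro j _
          simp [hf, Ne.symm hv]
      have hFout : ∑ j ∈ P.Iout v, P.mu v j * f v j = if i₀ = v then t else 0 := by
        by_cases hv : i₀ = v
        · subst hv
          rw [if_pos rfl, Finset.sum_eq_single j₀]
          · simp only [hf, and_self, if_true]
            exact mul_div_cancel₀ t hμ0.ne'
          · intro b _ hb
            simp [hf, hb]
          · intro hmem
            exact absurd hj₀ hmem
        · rw [if_neg hv]
          apply Finset.sum_eq_zero
          intro j _
          simp [hf, Ne.symm hv]
      rw [hEin, hEout, hFin, hFout]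
      have hT := hTel v
      rw [hc0, hcn] at hT
      split_ifs at hT ⊢ <;> linear_combination t * hT
    · -- (G5)
      have hSa : ∑ i, a i = 1 - t * C := by
        simp [ha]
      have hSe : ∑ i, ∑ j ∈ P.Itil i, e i j = t * K := by
        rw [hKdef, Finset.mul_sum]
        refine Finset.sum_congr rfl fun i _ => ?_
        rw [Finset.mul_sum]
      have hSf : ∑ i, ∑ j ∈ P.Iout i, f i j = t / P.mu i₀ j₀ := by
        rw [Finset.sum_eq_single i₀]
        · rw [Finset.sum_eq_single j₀]
          · simp [hf]
          · intro b _ hb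
            simp [hf, hb]
          · intro hmem; exact absurd hj₀ hmem
        · intro b _ hb
          apply Finset.sum_eq_zero; intro j _
          simp [hf, hb]
        · intro hmem; exact absurd (Finset.mem_univ i₀) hmem
      rw [hSa, hSe, hSf, hCdef]
      field_simp
      ring
    · -- (H1)
      intro i j hij
      by_cases h : i = i₀ ∧ j = j₀
      · obtain ⟨rfl, rfl⟩ := h
        have hqv : q i = 1 := rfl
        have hfv : f i j = t / P.mu i j := by simp [hf]
        have hmf : P.mu i j * f i j = t := by
          rw [hfv]; exact mul_div_cancel₀ t hμ0.ne'
        have hbu : P.beta i j * P.mu i j * u i j = t * (P.alpha i j + L) := by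
          simp only [hu, and_self, if_true]
          field_simp
        simp only [Kexp, Set.mem_union, Set.mem_setOf_eq]
        left
        refine ⟨?_, ?_, ?_⟩
        · show 0 < P.lam i j * q i - P.mu i j * f i j
          rw [hmf, hqv, mul_one]
          exact hlamt
        · show 0 < P.mu i j * f i j
          rw [hmf]; exact ht0
        · show P.beta i j * P.mu i j * u i j - P.alpha i j * P.mu i j * f i j ≤
            P.mu i j * f i j *
              Real.log ((P.lam i j * q i - P.mu i j * f i j) / (P.mu i j * f i j))
          have haf : P.alpha i j * P.mu i j * f i j = P.alpha i j * t := by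
            rw [mul_assoc, hmf]
          rw [hbu, haf, hmf, hqv, mul_one, ← hLdef]
          exact le_of_eq (by ring)
      · have hfv : f i j = 0 := by simp [hf, h]
        have huv : u i j = 0 := by simp [hu, h]
        simp only [Kexp, Set.mem_union, Set.mem_setOf_eq]
        right
        refine ⟨?_, ?_, ?_⟩
        · show 0 ≤ P.lam i j * q i - P.mu i j * f i j
          simpa [hfv, hq] using (P.lam_pos i j hij).le
        · show P.mu i j * f i j = 0
          simp [hfv]
        · show P.beta i j * P.mu i j * u i j - P.alpha i j * P.mu i j * f i j ≤ 0
          simp [hfv, huv]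
    · -- positivity of the objective
      have hobj1 : ∑ i, ∑ j ∈ P.Iout i, (P.mu i j * u i j - P.mu i j * P.phi i j * f i j) =
          t / P.beta i₀ j₀ * (P.alpha i₀ j₀ + L) - P.phi i₀ j₀ * t := by
        rw [Finset.sum_eq_single i₀]
        · rw [Finset.sum_eq_single j₀]
          · simp only [hf, hu, and_self, if_true]
            field_simp
          · intro b _ hb
            simp [hf, hu, hb]
          · intro hmem; exact absurd hj₀ hmem
        · intro b _ hb
          apply Finset.sum_eq_zero; intro j _
          simp [hf, hu, hb]
        · intro hmem; exact absurd (Finset.mem_univ i₀) hmem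
      have hobj2 : ∑ i, ∑ j ∈ P.Itil i, P.psi i j * P.mutil i j * e i j = t * Ψ := by
        rw [hΨdef, Finset.mul_sum]
        refine Finset.sum_congr rfl fun i _ => ?_
        rw [Finset.mul_sum]
        refine Finset.sum_congr rfl fun j hj => ?_
        have hm := P.mutil_pos i j hj
        simp only [he]
        field_simp
      rw [objCP2, hobj1, hobj2]
      have hkey : P.phi i₀ j₀ + Ψ < (P.alpha i₀ j₀ + L) / P.beta i₀ j₀ := by
        rw [lt_div_iff₀ hβ0]
        nlinarith [hL]
      have hpos := mul_pos ht0 (sub_pos.mpr hkey)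
      have heq : t / P.beta i₀ j₀ * (P.alpha i₀ j₀ + L) - P.phi i₀ j₀ * t - t * Ψ =
          t * ((P.alpha i₀ j₀ + L) / P.beta i₀ j₀ - (P.phi i₀ j₀ + Ψ)) := by ring
      linarith [heq ▸ hpos]
  refine ⟨main, ?_⟩
  intro a e f u q hopt
  obtain ⟨a', e', f', u', q', hfeas', hpos'⟩ := main
  exact lt_of_lt_of_le hpos' (hopt.2 a' e' f' u' q' hfeas')


end
end

section
/- At every optimal solution (ā*, ē*, f̄*, u*, q*) of problem CP2, one has f̄*_{ij}>0 for every (i,j)∈IJ, and q*_i=1 for every i∈I such that (i,j)∈IJ for some j∈I. -/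
open Finset

noncomputable section

variable {I : Type} [Fintype I] [DecidableEq I]

lemma Kexp_smul {v : ℝ × ℝ × ℝ} (hv : v ∈ Kexp) {t : ℝ} (ht : 0 < t) :
    ((t * v.1, t * v.2.1, t * v.2.2) : ℝ × ℝ × ℝ) ∈ Kexp := by
  rcases hv with ⟨h1, h2, h3⟩ | ⟨h1, h2, h3⟩
  · left
    refine ⟨by positivity, by positivity, ?_⟩
    show t * v.2.2 ≤ t * v.2.1 * Real.log (t * v.1 / (t * v.2.1))
    rw [mul_div_mul_left _ _ (ne_of_gt ht)]
    nlinarith [h3]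
  · right
    exact ⟨by positivity, by simp [show v.2.1 = 0 from h2],
      mul_nonpos_of_nonneg_of_nonpos ht.le h3⟩

lemma Kexp_mono {v : ℝ × ℝ × ℝ} (hv : v ∈ Kexp) {s : ℝ} (hs : v.1 ≤ s) :
    ((s, v.2.1, v.2.2) : ℝ × ℝ × ℝ) ∈ Kexp := by
  rcases hv with ⟨h1, h2, h3⟩ | ⟨h1, h2, h3⟩
  · left
    refine ⟨lt_of_lt_of_le h1 hs, h2, h3.trans ?_⟩
    have : Real.log (v.1 / v.2.1) ≤ Real.log (s / v.2.1) := by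
      apply Real.log_le_log (by positivity)
      gcongr
    nlinarith
  · right
    exact ⟨h1.trans hs, h2, h3⟩

lemma sum_sum_ite {I : Type} [Fintype I] [DecidableEq I] (S : I → Finset I) (i0 j0 : I)
    (h : j0 ∈ S i0) (g : I → I → ℝ) :
    ∑ i, ∑ j ∈ S i, (if i = i0 ∧ j = j0 then g i j else 0) = g i0 j0 := by
  have key : ∀ i, (∑ j ∈ S i, if i = i0 ∧ j = j0 then g i j else 0)
      = if i = i0 then g i0 j0 else 0 := by
    intro i
    by_cases hi : i = i0
    · subst hi
      simp only [true_and]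
      rw [Finset.sum_ite_eq' (S i) j0 (g i)]
      simp [h]
    · simp [hi]
  simp [key, Finset.sum_ite_eq']

lemma sum_affine {α : Type*} {s : Finset α} (W X Y : α → ℝ) (t : ℝ) :
    ∑ j ∈ s, W j * ((1 - t) * X j + Y j)
      = (1 - t) * ∑ j ∈ s, W j * X j + ∑ j ∈ s, W j * Y j := by
  rw [Finset.mul_sum, ← Finset.sum_add_distrib]
  exact Finset.sum_congr rfl fun j _ => by ring

lemma improve_q {I : Type} [Fintype I] [DecidableEq I] (P : Params2 I)
    (a : I → ℝ) (e f u : I → I → ℝ) (q : I → ℝ)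
    (hfeas : CP2Feasible P a e f u q) {i0 j0 : I} (hj0 : j0 ∈ P.Iout i0)
    (hfpos : 0 < f i0 j0) (hq0 : q i0 < 1) :
    ∃ u' q', CP2Feasible P a e f u' q' ∧ objCP2 P e f u < objCP2 P e f u' := by
  obtain ⟨⟨ha, he, hf, hq, hG4, hG5⟩, hH1⟩ := hfeas
  have hμ := P.mu_pos i0 j0 hj0
  have hlam := P.lam_pos i0 j0 hj0
  have hβ := P.beta_pos i0 j0 hj0
  rcases hH1 i0 j0 hj0 with ⟨h1, h2, h3⟩ | ⟨h1, h2, h3⟩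
  swap
  · exact absurd h2 (ne_of_gt (mul_pos hμ hfpos))
  simp only at h1 h2 h3
  have hA : P.lam i0 j0 * q i0 - P.mu i0 j0 * f i0 j0
      < P.lam i0 j0 - P.mu i0 j0 * f i0 j0 := by nlinarith
  have hApos : (0:ℝ) < P.lam i0 j0 - P.mu i0 j0 * f i0 j0 := lt_trans h1 hA
  set Δ : ℝ := f i0 j0 / P.beta i0 j0 *
      (Real.log (P.lam i0 j0 - P.mu i0 j0 * f i0 j0) -
       Real.log (P.lam i0 j0 * q i0 - P.mu i0 j0 * f i0 j0)) with hΔ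
  have hΔpos : 0 < Δ := by
    apply mul_pos (div_pos hfpos hβ)
    have := Real.log_lt_log h1 hA
    linarith
  set u' : I → I → ℝ := fun x y => if x = i0 ∧ y = j0 then u i0 j0 + Δ else u x y with hu'
  set q' : I → ℝ := fun x => if x = i0 then 1 else q x with hq'
  refine ⟨u', q', ⟨⟨ha, he, hf, ?_, hG4, hG5⟩, ?_⟩, ?_⟩
  · intro i
    by_cases hi : i = i0
    · simp [hq', hi]
    · simp [hq', hi, hq i]
  · intro i j hij
    by_cases hc : i = i0 ∧ j = j0
    · obtain ⟨rfl, rfl⟩ := hc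
      simp only [hu', hq', and_self, if_pos rfl, ite_true]
      have hqle : P.lam i j * q i ≤ P.lam i j * 1 :=
        mul_le_mul_of_nonneg_left (hq i).2 hlam.le
      left
      refine ⟨by simp only; nlinarith, by simpa using h2, ?_⟩
      simp only [mul_one]
      have hμf : (0:ℝ) < P.mu i j * f i j := mul_pos hμ hfpos
      have e1 : Real.log ((P.lam i j * q i - P.mu i j * f i j) / (P.mu i j * f i j))
          = Real.log (P.lam i j * q i - P.mu i j * f i j) - Real.log (P.mu i j * f i j) :=
        Real.log_div (ne_of_gt h1) (ne_of_gt hμf)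
      have e2 : Real.log ((P.lam i j - P.mu i j * f i j) / (P.mu i j * f i j))
          = Real.log (P.lam i j - P.mu i j * f i j) - Real.log (P.mu i j * f i j) :=
        Real.log_div (ne_of_gt hApos) (ne_of_gt hμf)
      have e3 : P.beta i j * P.mu i j * (u i j + Δ)
          = P.beta i j * P.mu i j * u i j
            + P.mu i j * f i j * (Real.log (P.lam i j - P.mu i j * f i j)
              - Real.log (P.lam i j * q i - P.mu i j * f i j)) := by
        rw [hΔ]; field_simp
      rw [e1, mul_sub] at h3
      rw [e2, e3, mul_sub]
      linarith
    · simp only [hu', hq', if_neg hc]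
      by_cases hi : i = i0
      · subst hi
        simp only [if_pos rfl]
        have hqle : P.lam i j * q i ≤ P.lam i j * 1 :=
          mul_le_mul_of_nonneg_left (hq i).2 (P.lam_pos i j hij).le
        have := Kexp_mono (hH1 i j hij)
          (show P.lam i j * q i - P.mu i j * f i j
              ≤ P.lam i j * 1 - P.mu i j * f i j by linarith)
        simpa using this
      · simp only [if_neg hi]
        exact hH1 i j hij
  · have key : objCP2 P e f u' = objCP2 P e f u + P.mu i0 j0 * Δ := by
      unfold objCP2
      have h4 : ∑ i, ∑ j ∈ P.Iout i, (P.mu i j * u' i j - P.mu i j * P.phi i j * f i j)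
          = ∑ i, ∑ j ∈ P.Iout i,
              ((P.mu i j * u i j - P.mu i j * P.phi i j * f i j)
                + (if i = i0 ∧ j = j0 then P.mu i j * Δ else 0)) := by
        apply Finset.sum_congr rfl; intro i _
        apply Finset.sum_congr rfl; intro j _
        simp only [hu']
        split_ifs with h
        · rw [h.1, h.2]; ring
        · ring
      rw [h4]
      have h5 : ∑ i, ∑ j ∈ P.Iout i,
            ((P.mu i j * u i j - P.mu i j * P.phi i j * f i j)
              + (if i = i0 ∧ j = j0 then P.mu i j * Δ else 0))
          = ∑ i, ∑ j ∈ P.Iout i, (P.mu i j * u i j - P.mu i j * P.phi i j * f i j)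
            + ∑ i, ∑ j ∈ P.Iout i, (if i = i0 ∧ j = j0 then P.mu i j * Δ else 0) := by
        rw [← Finset.sum_add_distrib]
        exact Finset.sum_congr rfl fun i _ => Finset.sum_add_distrib
      rw [h5, sum_sum_ite P.Iout i0 j0 hj0 (fun i j => P.mu i j * Δ)]
      ring
    rw [key]
    nlinarith [mul_pos hμ hΔpos]


lemma improve_f {I : Type} [Fintype I] [DecidableEq I] (P : Params2 I)
    (a : I → ℝ) (e f u : I → I → ℝ) (q : I → ℝ)
    (hfeas : CP2Feasible P a e f u q) {i0 j0 : I} (hj0 : j0 ∈ P.Iout i0)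
    (hf0 : f i0 j0 = 0) :
    ∃ a' e' f' u' q', CP2Feasible P a' e' f' u' q' ∧
      objCP2 P e f u < objCP2 P e' f' u' := by
  obtain ⟨⟨ha, he, hf, hq, hG4, hG5⟩, hH1⟩ := hfeas
  obtain ⟨n, c, hc0, hcn, hcstep⟩ := P.connected j0 i0
  have hmu := P.mu_pos i0 j0 hj0
  have hlam := P.lam_pos i0 j0 hj0
  have hbeta := P.beta_pos i0 j0 hj0
  have harc : ∀ m, m < n → 0 < P.mutil (c m) (c (m + 1)) :=
    fun m hm => P.mutil_pos _ _ (hcstep m hm)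
  set V : ℝ := objCP2 P e f u with hV
  set C : ℝ := 1 + ∑ m ∈ Finset.range n, P.mu i0 j0 / P.mutil (c m) (c (m + 1)) with hC
  have hC1 : 1 ≤ C := by
    rw [hC]
    have : 0 ≤ ∑ m ∈ Finset.range n, P.mu i0 j0 / P.mutil (c m) (c (m + 1)) :=
      Finset.sum_nonneg fun m hm =>
        div_nonneg hmu.le (harc m (Finset.mem_range.mp hm)).le
    linarith
  have hCpos : (0:ℝ) < C := lt_of_lt_of_le one_pos hC1
  set D : ℝ := ∑ m ∈ Finset.range n, P.psi (c m) (c (m + 1)) * P.mu i0 j0 with hD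
  set K : ℝ := P.beta i0 j0 / P.mu i0 j0 * (C * V + P.mu i0 j0 * P.phi i0 j0 + D)
      - P.alpha i0 j0 with hK
  set ε : ℝ := min (P.lam i0 j0 / (2 * P.mu i0 j0 * (1 + Real.exp K))) (1 / (2 * C)) with hε
  have hεpos : 0 < ε := by
    apply lt_min
    · positivity
    · positivity
  have hεK : P.mu i0 j0 * ε * (1 + Real.exp K) ≤ P.lam i0 j0 / 2 := by
    have h := min_le_left (P.lam i0 j0 / (2 * P.mu i0 j0 * (1 + Real.exp K))) (1 / (2 * C))
    rw [← hε] at h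
    have h2 : (0:ℝ) < 2 * P.mu i0 j0 * (1 + Real.exp K) := by positivity
    rw [le_div_iff₀ h2] at h
    nlinarith
  have hepsmul : P.mu i0 j0 * ε < P.lam i0 j0 := by
    nlinarith [Real.exp_pos K, mul_pos hmu hεpos]
  set t : ℝ := C * ε with ht
  have htpos : 0 < t := mul_pos hCpos hεpos
  have hthalf : t ≤ 1 / 2 := by
    have h := min_le_right (P.lam i0 j0 / (2 * P.mu i0 j0 * (1 + Real.exp K))) (1 / (2 * C))
    rw [← hε] at h
    rw [le_div_iff₀ (by positivity)] at h
    nlinarith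
  have h1t : 0 < 1 - t := by linarith
  set L : ℝ := Real.log ((P.lam i0 j0 - P.mu i0 j0 * ε) / (P.mu i0 j0 * ε)) with hL
  have hKL : K < L := by
    rw [hL, Real.lt_log_iff_exp_lt (div_pos (by linarith) (by positivity))]
    rw [lt_div_iff₀ (by positivity)]
    nlinarith
  set w : ℝ := ε / P.beta i0 j0 * (P.alpha i0 j0 + L) with hw
  set δ : I → I → ℝ := fun x y => ∑ m ∈ Finset.range n,
      if c m = x ∧ c (m + 1) = y then ε * P.mu i0 j0 / P.mutil x y else 0 with hδ
  set pf : I → I → ℝ := fun x y => if x = i0 ∧ y = j0 then ε else 0 with hpf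
  set pu : I → I → ℝ := fun x y => if x = i0 ∧ y = j0 then w else 0 with hpu
  set a' : I → ℝ := fun i => (1 - t) * a i with ha'
  set e' : I → I → ℝ := fun x y => (1 - t) * e x y + δ x y with he'
  set f' : I → I → ℝ := fun x y => (1 - t) * f x y + pf x y with hf'
  set u' : I → I → ℝ := fun x y => (1 - t) * u x y + pu x y with hu'
  set q' : I → ℝ := fun _ => (1:ℝ) with hq'
  -- generic evaluation of weighted δ
  have hδvalW : ∀ (W : I → I → ℝ) (x y : I), W x y * δ x y
      = ∑ m ∈ Finset.range n, (if c m = x ∧ c (m + 1) = y then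
          W (c m) (c (m + 1)) * (ε * P.mu i0 j0 / P.mutil (c m) (c (m + 1))) else 0) := by
    intro W x y
    simp only [hδ]
    rw [Finset.mul_sum]
    apply Finset.sum_congr rfl
    intro m _
    split_ifs with h
    · rw [← h.1, ← h.2]
    · rw [mul_zero]
  have hδval : ∀ x y : I, P.mutil x y * δ x y
      = ∑ m ∈ Finset.range n, (if c m = x ∧ c (m + 1) = y then ε * P.mu i0 j0 else 0) := by
    intro x y
    rw [hδvalW P.mutil x y]
    apply Finset.sum_congr rfl
    intro m hm
    split_ifs with h
    · rw [mul_comm, div_mul_cancel₀ _ (ne_of_gt (harc m (Finset.mem_range.mp hm)))]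
    · rfl
  have hpin1 : ∀ (m : ℕ) (y : I) (X : ℝ),
      (∑ x : I, if c m = x ∧ c (m + 1) = y then X else 0)
        = if c (m + 1) = y then X else 0 := by
    intro m y X
    by_cases h : c (m + 1) = y
    · simp only [h, and_true]
      rw [Finset.sum_ite_eq]
      simp
    · simp [h]
  have hpin2 : ∀ (m : ℕ) (x : I) (X : ℝ),
      (∑ y : I, if c m = x ∧ c (m + 1) = y then X else 0)
        = if c m = x then X else 0 := by
    intro m x X
    by_cases h : c m = x
    · simp only [h, true_and]
      rw [Finset.sum_ite_eq]
      simp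
    · simp [h]
  have hδin : ∀ i : I, ∑ j ∈ Finset.univ.filter (fun j => i ∈ P.Itil j), P.mutil j i * δ j i
      = ∑ m ∈ Finset.range n, (if c (m + 1) = i then ε * P.mu i0 j0 else 0) := by
    intro i
    have hzero : ∀ j ∈ (Finset.univ : Finset I),
        j ∉ Finset.univ.filter (fun j => i ∈ P.Itil j) → P.mutil j i * δ j i = 0 := by
      intro j _ hj
      simp only [Finset.mem_filter, Finset.mem_univ, true_and] at hj
      rw [hδval j i]
      apply Finset.sum_eq_zero
      intro m hm
      rw [if_neg]
      rintro ⟨h1, h2⟩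
      exact hj (by rw [← h1, ← h2]; exact hcstep m (Finset.mem_range.mp hm))
    rw [Finset.sum_subset (Finset.filter_subset _ _) hzero]
    calc ∑ j : I, P.mutil j i * δ j i
        = ∑ j : I, ∑ m ∈ Finset.range n,
            (if c m = j ∧ c (m + 1) = i then ε * P.mu i0 j0 else 0) :=
          Finset.sum_congr rfl fun j _ => hδval j i
      _ = ∑ m ∈ Finset.range n, ∑ j : I,
            (if c m = j ∧ c (m + 1) = i then ε * P.mu i0 j0 else 0) := Finset.sum_comm
      _ = ∑ m ∈ Finset.range n, (if c (m + 1) = i then ε * P.mu i0 j0 else 0) :=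
          Finset.sum_congr rfl fun m _ => hpin1 m i _
  have hδout : ∀ i : I, ∑ j ∈ P.Itil i, P.mutil i j * δ i j
      = ∑ m ∈ Finset.range n, (if c m = i then ε * P.mu i0 j0 else 0) := by
    intro i
    have hzero : ∀ j ∈ (Finset.univ : Finset I), j ∉ P.Itil i → P.mutil i j * δ i j = 0 := by
      intro j _ hj
      rw [hδval i j]
      apply Finset.sum_eq_zero
      intro m hm
      rw [if_neg]
      rintro ⟨h1, h2⟩
      exact hj (by rw [← h1, ← h2]; exact hcstep m (Finset.mem_range.mp hm))
    rw [Finset.sum_subset (Finset.subset_univ (P.Itil i)) hzero]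
    calc ∑ j : I, P.mutil i j * δ i j
        = ∑ j : I, ∑ m ∈ Finset.range n,
            (if c m = i ∧ c (m + 1) = j then ε * P.mu i0 j0 else 0) :=
          Finset.sum_congr rfl fun j _ => hδval i j
      _ = ∑ m ∈ Finset.range n, ∑ j : I,
            (if c m = i ∧ c (m + 1) = j then ε * P.mu i0 j0 else 0) := Finset.sum_comm
      _ = ∑ m ∈ Finset.range n, (if c m = i then ε * P.mu i0 j0 else 0) :=
          Finset.sum_congr rfl fun m _ => hpin2 m i _
  have hδdouble : ∀ W : I → I → ℝ, ∑ i : I, ∑ j ∈ P.Itil i, W i j * δ i j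
      = ∑ m ∈ Finset.range n,
          W (c m) (c (m + 1)) * (ε * P.mu i0 j0 / P.mutil (c m) (c (m + 1))) := by
    intro W
    have h1 : ∀ i : I, ∑ j ∈ P.Itil i, W i j * δ i j
        = ∑ m ∈ Finset.range n, (if c m = i then
            W (c m) (c (m + 1)) * (ε * P.mu i0 j0 / P.mutil (c m) (c (m + 1))) else 0) := by
      intro i
      have hzero : ∀ j ∈ (Finset.univ : Finset I), j ∉ P.Itil i → W i j * δ i j = 0 := by
        intro j _ hj
        rw [hδvalW W i j]
        apply Finset.sum_eq_zero
        intro m hm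
        rw [if_neg]
        rintro ⟨h1, h2⟩
        exact hj (by rw [← h1, ← h2]; exact hcstep m (Finset.mem_range.mp hm))
      rw [Finset.sum_subset (Finset.subset_univ (P.Itil i)) hzero]
      calc ∑ j : I, W i j * δ i j
          = ∑ j : I, ∑ m ∈ Finset.range n, (if c m = i ∧ c (m + 1) = j then
              W (c m) (c (m + 1)) * (ε * P.mu i0 j0 / P.mutil (c m) (c (m + 1))) else 0) :=
            Finset.sum_congr rfl fun j _ => hδvalW W i j
        _ = ∑ m ∈ Finset.range n, ∑ j : I, (if c m = i ∧ c (m + 1) = j then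
              W (c m) (c (m + 1)) * (ε * P.mu i0 j0 / P.mutil (c m) (c (m + 1))) else 0) :=
            Finset.sum_comm
        _ = _ := Finset.sum_congr rfl fun m _ => hpin2 m i _
    calc ∑ i : I, ∑ j ∈ P.Itil i, W i j * δ i j
        = ∑ i : I, ∑ m ∈ Finset.range n, (if c m = i then
            W (c m) (c (m + 1)) * (ε * P.mu i0 j0 / P.mutil (c m) (c (m + 1))) else 0) :=
          Finset.sum_congr rfl fun i _ => h1 i
      _ = ∑ m ∈ Finset.range n, ∑ i : I, (if c m = i then
            W (c m) (c (m + 1)) * (ε * P.mu i0 j0 / P.mutil (c m) (c (m + 1))) else 0) :=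
          Finset.sum_comm
      _ = _ := by
          apply Finset.sum_congr rfl
          intro m _
          rw [Finset.sum_ite_eq]
          simp
  have hδtot : ∑ i : I, ∑ j ∈ P.Itil i, δ i j = ε * (C - 1) := by
    have h1 := hδdouble (fun _ _ => 1)
    simp only [one_mul] at h1
    calc ∑ i : I, ∑ j ∈ P.Itil i, δ i j
        = ∑ i : I, ∑ j ∈ P.Itil i, (1:ℝ) * δ i j := by simp
      _ = ∑ m ∈ Finset.range n, ε * P.mu i0 j0 / P.mutil (c m) (c (m + 1)) := by
          rw [← h1]; simp
      _ = ε * (C - 1) := by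
          rw [hC, add_sub_cancel_left, Finset.mul_sum]
          exact Finset.sum_congr rfl fun m _ => by rw [mul_div_assoc]
  have hδψ : ∑ i : I, ∑ j ∈ P.Itil i, P.psi i j * P.mutil i j * δ i j = ε * D := by
    rw [hδdouble (fun x y => P.psi x y * P.mutil x y), hD, Finset.mul_sum]
    apply Finset.sum_congr rfl
    intro m hm
    have h := harc m (Finset.mem_range.mp hm)
    field_simp
  have hpfin : ∀ i : I, ∑ j ∈ Finset.univ.filter (fun j => i ∈ P.Iout j), P.mu j i * pf j i
      = if i = j0 then ε * P.mu i0 j0 else 0 := by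
    intro i
    have hzero : ∀ j ∈ (Finset.univ : Finset I),
        j ∉ Finset.univ.filter (fun j => i ∈ P.Iout j) → P.mu j i * pf j i = 0 := by
      intro j _ hj
      simp only [Finset.mem_filter, Finset.mem_univ, true_and] at hj
      simp only [hpf]
      rw [if_neg, mul_zero]
      rintro ⟨rfl, rfl⟩
      exact hj hj0
    rw [Finset.sum_subset (Finset.filter_subset _ _) hzero]
    simp only [hpf]
    by_cases hi : i = j0
    · simp only [hi, and_true, eq_self_iff_true, if_true]
      have hterm : ∀ j : I, P.mu j j0 * (if j = i0 then ε else 0)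
          = if j = i0 then ε * P.mu i0 j0 else 0 := by
        intro j
        split_ifs with h
        · rw [h, mul_comm]
        · rw [mul_zero]
      rw [Finset.sum_congr rfl fun j _ => hterm j, Finset.sum_ite_eq']
      simp
    · simp [hi]
  have hpfout : ∀ i : I, ∑ j ∈ P.Iout i, P.mu i j * pf i j
      = if i = i0 then ε * P.mu i0 j0 else 0 := by
    intro i
    simp only [hpf]
    by_cases hi : i = i0
    · simp only [hi, true_and, eq_self_iff_true, if_true]
      have hterm : ∀ j : I, P.mu i0 j * (if j = j0 then ε else 0)
          = if j = j0 then ε * P.mu i0 j0 else 0 := by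
        intro j
        split_ifs with h
        · rw [h, mul_comm]
        · rw [mul_zero]
      rw [Finset.sum_congr rfl fun j _ => hterm j, Finset.sum_ite_eq']
      simp [hj0]
    · simp [hi]
  have htel : ∀ i : I,
      (∑ m ∈ Finset.range n, (if c (m + 1) = i then ε * P.mu i0 j0 else 0))
        - (∑ m ∈ Finset.range n, (if c m = i then ε * P.mu i0 j0 else 0))
      = (if i = i0 then ε * P.mu i0 j0 else 0) - (if i = j0 then ε * P.mu i0 j0 else 0) := by
    intro i
    have h := Finset.sum_range_sub (fun m => if c m = i then ε * P.mu i0 j0 else 0) n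
    rw [Finset.sum_sub_distrib] at h
    rw [h, hcn, hc0]
    have e1 : ∀ z : I, (if z = i then ε * P.mu i0 j0 else 0) = (if i = z then ε * P.mu i0 j0 else 0) := by
      intro z
      by_cases hz : z = i
      · rw [if_pos hz, if_pos hz.symm]
      · rw [if_neg hz, if_neg fun hh => hz hh.symm]
    rw [e1 i0, e1 j0]
  -- nonnegativity of δ
  have hδnn : ∀ x y : I, 0 ≤ δ x y := by
    intro x y
    simp only [hδ]
    apply Finset.sum_nonneg
    intro m hm
    split_ifs with h
    · have := harc m (Finset.mem_range.mp hm)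
      rw [← h.1, ← h.2]
      positivity
    · exact le_rfl
  clear_value V C D K ε t L w δ pf pu a' e' f' u' q'
  refine ⟨a', e', f', u', q', ⟨⟨?_, ?_, ?_, ?_, ?_, ?_⟩, ?_⟩, ?_⟩
  · intro i
    simp only [ha']
    exact mul_nonneg h1t.le (ha i)
  · intro i j hij
    simp only [he']
    exact add_nonneg (mul_nonneg h1t.le (he i j hij)) (hδnn i j)
  · intro i j hij
    simp only [hf', hpf]
    apply add_nonneg (mul_nonneg h1t.le (hf i j hij))
    split_ifs
    · exact hεpos.le
    · exact le_rfl
  · intro i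
    simp only [hq']
    exact ⟨zero_le_one, le_rfl⟩
  · -- (G4)
    intro i
    simp only [he', hf']
    rw [sum_affine (fun j => P.mutil j i) (fun j => e j i) (fun j => δ j i) t,
        sum_affine (fun j => P.mu j i) (fun j => f j i) (fun j => pf j i) t,
        sum_affine (fun j => P.mutil i j) (fun j => e i j) (fun j => δ i j) t,
        sum_affine (fun j => P.mu i j) (fun j => f i j) (fun j => pf i j) t,
        hδin i, hδout i, hpfin i, hpfout i]
    have h4 := hG4 i
    have h5 := htel i
    linear_combination (1 - t) * h4 + h5
  · -- (G5)
    simp only [ha', he', hf']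
    have hA : ∑ i : I, (1 - t) * a i = (1 - t) * ∑ i : I, a i := by
      rw [Finset.mul_sum]
    have hE : ∑ i : I, ∑ j ∈ P.Itil i, ((1 - t) * e i j + δ i j)
        = (1 - t) * (∑ i : I, ∑ j ∈ P.Itil i, e i j) + ε * (C - 1) := by
      rw [← hδtot, Finset.mul_sum, ← Finset.sum_add_distrib]
      apply Finset.sum_congr rfl
      intro i _
      rw [Finset.sum_add_distrib, Finset.mul_sum]
    have hF : ∑ i : I, ∑ j ∈ P.Iout i, ((1 - t) * f i j + pf i j)
        = (1 - t) * (∑ i : I, ∑ j ∈ P.Iout i, f i j) + ε := by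
      have hpftot : ∑ i : I, ∑ j ∈ P.Iout i, pf i j = ε := by
        simp only [hpf]
        exact sum_sum_ite P.Iout i0 j0 hj0 (fun _ _ => ε)
      rw [← hpftot, Finset.mul_sum, ← Finset.sum_add_distrib]
      apply Finset.sum_congr rfl
      intro i _
      rw [Finset.sum_add_distrib, Finset.mul_sum]
    rw [hA, hE, hF, ht]
    linear_combination (1 - C * ε) * hG5
  · -- (H1)
    intro i j hij
    clear hδvalW hδval hpin1 hpin2 hδin hδout hδdouble hδtot hδψ hpfin hpfout htel
    clear hδnn hG4 hG5 hc0 hcn hcstep harc hδ he' ha' hεK hC1 hthalf hε hC hD hK hV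
    by_cases hc : i = i0 ∧ j = j0
    · obtain ⟨rfl, rfl⟩ := hc
      have hmem := hH1 i j hij
      rw [hf0] at hmem
      simp only [mul_zero, sub_zero] at hmem
      have hu0 : u i j ≤ 0 := by
        rcases hmem with hh | hh
        · exact absurd (show (0:ℝ) < 0 from hh.2.1) (lt_irrefl 0)
        · have hh3 : P.beta i j * P.mu i j * u i j ≤ 0 := hh.2.2
          by_contra hpos
          push_neg at hpos
          linarith [mul_pos (mul_pos hbeta hmu) hpos]
      simp only [hq', hf', hu', hpf, hpu, and_self, if_true, ite_true, eq_self_iff_true]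
      rw [hf0]
      simp only [mul_zero, zero_add, mul_one]
      left
      refine ⟨show (0:ℝ) < P.lam i j - P.mu i j * ε by linarith,
        show (0:ℝ) < P.mu i j * ε from mul_pos hmu hεpos, ?_⟩
      show P.beta i j * P.mu i j * ((1 - t) * u i j + w) - P.alpha i j * P.mu i j * ε
          ≤ P.mu i j * ε * Real.log ((P.lam i j - P.mu i j * ε) / (P.mu i j * ε))
      rw [← hL]
      have hwv : P.beta i j * P.mu i j * w = P.mu i j * ε * (P.alpha i j + L) := by
        rw [hw]
        field_simp
      have h7 : P.beta i j * P.mu i j * ((1 - t) * u i j) ≤ 0 :=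
        mul_nonpos_of_nonneg_of_nonpos (mul_pos hbeta hmu).le
          (mul_nonpos_of_nonneg_of_nonpos h1t.le hu0)
      linarith [hwv, h7]
    · simp only [hq', hf', hu', hpf, hpu, if_neg hc, add_zero]
      have hs := Kexp_smul (hH1 i j hij) h1t
      have hle : (1 - t) * (P.lam i j * q i - P.mu i j * f i j)
          ≤ P.lam i j * 1 - P.mu i j * ((1 - t) * f i j) := by
        have hqnn := (hq i).1
        have hq1 := (hq i).2
        have hlp := P.lam_pos i j hij
        have hql : (1 - t) * q i ≤ 1 := mul_le_one₀ (sub_le_self 1 htpos.le) hqnn hq1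
        have := mul_le_mul_of_nonneg_left hql hlp.le
        nlinarith [this]
      have hm := Kexp_mono hs hle
      have hm' : ((P.lam i j * 1 - P.mu i j * ((1 - t) * f i j),
          P.mu i j * ((1 - t) * f i j),
          P.beta i j * P.mu i j * ((1 - t) * u i j)
            - P.alpha i j * P.mu i j * ((1 - t) * f i j)) : ℝ × ℝ × ℝ) ∈ Kexp := by
        have heq2 : ((P.lam i j * 1 - P.mu i j * ((1 - t) * f i j),
            P.mu i j * ((1 - t) * f i j),
            P.beta i j * P.mu i j * ((1 - t) * u i j)
              - P.alpha i j * P.mu i j * ((1 - t) * f i j)) : ℝ × ℝ × ℝ)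
            = (P.lam i j * 1 - P.mu i j * ((1 - t) * f i j),
              (1 - t) * (P.mu i j * f i j),
              (1 - t) * (P.beta i j * P.mu i j * u i j
                - P.alpha i j * P.mu i j * f i j)) := by
          simp only [Prod.mk.injEq]
          exact ⟨trivial, by ring, by ring⟩
        rw [heq2]
        exact hm
      exact hm'
  · -- strict improvement of the objective
    have hobj : objCP2 P e' f' u' = (1 - t) * V
        + (P.mu i0 j0 * w - P.mu i0 j0 * P.phi i0 j0 * ε - ε * D) := by
      rw [hV]
      unfold objCP2
      have hsum1 : ∑ i : I, ∑ j ∈ P.Iout i,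
            (P.mu i j * u' i j - P.mu i j * P.phi i j * f' i j)
          = ∑ i : I, ∑ j ∈ P.Iout i,
              ((1 - t) * (P.mu i j * u i j - P.mu i j * P.phi i j * f i j)
                + (if i = i0 ∧ j = j0 then
                    P.mu i j * w - P.mu i j * P.phi i j * ε else 0)) := by
        apply Finset.sum_congr rfl
        intro i _
        apply Finset.sum_congr rfl
        intro j _
        simp only [hu', hf', hpu, hpf]
        split_ifs with h
        · ring
        · ring
      have hsum2 : ∑ i : I, ∑ j ∈ P.Iout i,
            ((1 - t) * (P.mu i j * u i j - P.mu i j * P.phi i j * f i j)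
              + (if i = i0 ∧ j = j0 then P.mu i j * w - P.mu i j * P.phi i j * ε else 0))
          = (1 - t) * (∑ i : I, ∑ j ∈ P.Iout i,
              (P.mu i j * u i j - P.mu i j * P.phi i j * f i j))
            + (P.mu i0 j0 * w - P.mu i0 j0 * P.phi i0 j0 * ε) := by
        rw [← sum_sum_ite P.Iout i0 j0 hj0
            (fun i j => P.mu i j * w - P.mu i j * P.phi i j * ε),
          Finset.mul_sum, ← Finset.sum_add_distrib]
        apply Finset.sum_congr rfl
        intro i _
        rw [Finset.sum_add_distrib, Finset.mul_sum]
      have hsum3 : ∑ i : I, ∑ j ∈ P.Itil i, P.psi i j * P.mutil i j * e' i j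
          = (1 - t) * (∑ i : I, ∑ j ∈ P.Itil i, P.psi i j * P.mutil i j * e i j)
            + ε * D := by
        rw [← hδψ, Finset.mul_sum, ← Finset.sum_add_distrib]
        apply Finset.sum_congr rfl
        intro i _
        simp only [he']
        exact sum_affine (fun j => P.psi i j * P.mutil i j) (fun j => e i j)
          (fun j => δ i j) t
      rw [hsum1, hsum2, hsum3]
      ring
    rw [hobj]
    have hmain : C * V + P.mu i0 j0 * P.phi i0 j0 + D
        < P.mu i0 j0 / P.beta i0 j0 * (P.alpha i0 j0 + L) := by
      have h1 : P.beta i0 j0 / P.mu i0 j0 * (C * V + P.mu i0 j0 * P.phi i0 j0 + D)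
          < P.alpha i0 j0 + L := by
        have h2 := hKL
        rw [hK] at h2
        linarith
      calc C * V + P.mu i0 j0 * P.phi i0 j0 + D
          = P.mu i0 j0 / P.beta i0 j0 * (P.beta i0 j0 / P.mu i0 j0
              * (C * V + P.mu i0 j0 * P.phi i0 j0 + D)) := by
            field_simp
        _ < P.mu i0 j0 / P.beta i0 j0 * (P.alpha i0 j0 + L) :=
            mul_lt_mul_of_pos_left h1 (div_pos hmu hbeta)
    clear hδvalW hδval hpin1 hpin2 hδin hδout hδdouble hδtot hδψ hpfin hpfout htel
    clear hδnn hG4 hG5 hc0 hcn hcstep harc hδ he' ha' hf' hu' hq' hpf hpu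
    have h2 := mul_lt_mul_of_pos_left hmain hεpos
    have hwv : P.mu i0 j0 * w = ε * (P.mu i0 j0 / P.beta i0 j0 * (P.alpha i0 j0 + L)) := by
      rw [hw]
      field_simp
    rw [ht, hwv]
    linarith [h2]



/-- At every optimal solution of CP2, `f̄*_{ij} > 0` for every `(i,j) ∈ IJ`, and
`q*_i = 1` for every zone `i` having at least one trip destination. -/
theorem CP2_optimal_f_pos_q_one {I : Type} [Fintype I] [DecidableEq I] (P : Params2 I)
    (a : I → ℝ) (e f u : I → I → ℝ) (q : I → ℝ)
    (hopt : CP2Optimal P a e f u q) :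
    (∀ i j, j ∈ P.Iout i → 0 < f i j) ∧
    (∀ i : I, (∃ j, j ∈ P.Iout i) → q i = 1) := by
  obtain ⟨hfeas, hopt'⟩ := hopt
  have hfpos : ∀ i j, j ∈ P.Iout i → 0 < f i j := by
    intro i j hij
    rcases lt_or_eq_of_le (hfeas.1.2.2.1 i j hij) with h | h
    · exact h
    · exfalso
      obtain ⟨a', e', f', u', q', hfe, hlt⟩ := improve_f P a e f u q hfeas hij h.symm
      exact absurd (hopt' a' e' f' u' q' hfe) (not_le.mpr hlt)
  refine ⟨hfpos, ?_⟩
  rintro i ⟨j, hj⟩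
  by_contra hne
  have hqlt : q i < 1 := lt_of_le_of_ne (hfeas.1.2.2.2.1 i).2 hne
  obtain ⟨u', q', hfe, hlt⟩ := improve_q P a e f u q hfeas hj (hfpos i j hj) hqlt
  exact absurd (hopt' a e f u' q' hfe) (not_le.mpr hlt)

end
end

section
/- Closure description of the exponential cone: the closure in ℝ³ of the set {(a₁,a₂,a₃)∈ℝ³ : a₁>0, a₂>0, a₃ ≤ a₂·log(a₁/a₂)} equals {(a₁,a₂,a₃)∈ℝ³ : a₁>0, a₂>0, a₃ ≤ a₂·log(a₁/a₂)} ∪ {(a₁,0,a₃)∈ℝ³ : a₁≥0, a₃≤0}. -/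
open Real Filter Topology

private lemma aux_sqrt_bound {a b : ℝ} (ha : 0 < a) (hb : 0 < b) :
    b * Real.log (a / b) ≤ 2 * Real.sqrt (a * b) := by
  have hab : 0 < a / b := div_pos ha hb
  have h1 : Real.log (a / b) = 2 * Real.log (Real.sqrt (a / b)) := by
    rw [Real.log_sqrt hab.le]; ring
  have h2 : Real.log (Real.sqrt (a / b)) ≤ Real.sqrt (a / b) :=
    (Real.log_le_sub_one_of_pos (Real.sqrt_pos.mpr hab)).trans (by linarith)
  have h3 : b * Real.sqrt (a / b) = Real.sqrt (a * b) := by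
    have : b = Real.sqrt (b ^ 2) := (Real.sqrt_sq hb.le).symm
    rw [this, ← Real.sqrt_mul (sq_nonneg b)]
    congr 1
    field_simp
    ring_nf; rw [Real.sq_sqrt (sq_nonneg b)]
  calc b * Real.log (a / b) = 2 * (b * Real.log (Real.sqrt (a / b))) := by
        rw [h1]; ring
    _ ≤ 2 * (b * Real.sqrt (a / b)) := by
        have := mul_le_mul_of_nonneg_left h2 hb.le
        linarith
    _ = 2 * Real.sqrt (a * b) := by rw [h3]

/-- Closure description of the exponential cone: the closure of
`{(a₁,a₂,a₃) : a₁ > 0, a₂ > 0, a₃ ≤ a₂ log(a₁/a₂)}` in `ℝ³` is that set together with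
`{(a₁,0,a₃) : a₁ ≥ 0, a₃ ≤ 0}`. -/
theorem Kexp_closure :
    closure {v : ℝ × ℝ × ℝ |
        0 < v.1 ∧ 0 < v.2.1 ∧ v.2.2 ≤ v.2.1 * Real.log (v.1 / v.2.1)} =
      {v : ℝ × ℝ × ℝ |
        0 < v.1 ∧ 0 < v.2.1 ∧ v.2.2 ≤ v.2.1 * Real.log (v.1 / v.2.1)} ∪
      {v : ℝ × ℝ × ℝ | 0 ≤ v.1 ∧ v.2.1 = 0 ∧ v.2.2 ≤ 0} := by
  apply Set.Subset.antisymm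
  · intro v hv
    obtain ⟨x, hxS, hxv⟩ := mem_closure_iff_seq_limit.mp hv
    have h1 : Tendsto (fun n => (x n).1) atTop (𝓝 v.1) :=
      (continuous_fst.tendsto v).comp hxv
    have h2 : Tendsto (fun n => (x n).2.1) atTop (𝓝 v.2.1) :=
      ((continuous_fst.comp continuous_snd).tendsto v).comp hxv
    have h3 : Tendsto (fun n => (x n).2.2) atTop (𝓝 v.2.2) :=
      ((continuous_snd.comp continuous_snd).tendsto v).comp hxv
    have hv1 : 0 ≤ v.1 := ge_of_tendsto' h1 fun n => (hxS n).1.le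
    have hv2 : 0 ≤ v.2.1 := ge_of_tendsto' h2 fun n => (hxS n).2.1.le
    rcases eq_or_lt_of_le hv2 with hv2e | hv2p
    · -- v.2.1 = 0 : boundary part
      right
      refine ⟨hv1, hv2e.symm, ?_⟩
      -- v.2.2 ≤ 2 √(v.1 * v.2.1) = 0
      have hle : ∀ n, (x n).2.2 ≤ 2 * Real.sqrt ((x n).1 * (x n).2.1) := fun n =>
        (hxS n).2.2.trans (aux_sqrt_bound (hxS n).1 (hxS n).2.1)
      have hR : Tendsto (fun n => 2 * Real.sqrt ((x n).1 * (x n).2.1)) atTop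
          (𝓝 (2 * Real.sqrt (v.1 * v.2.1))) :=
        ((Real.continuous_sqrt.tendsto _).comp (h1.mul h2)).const_mul 2
      have := le_of_tendsto_of_tendsto' h3 hR hle
      rw [← hv2e, mul_zero, Real.sqrt_zero, mul_zero] at this
      exact this
    · -- v.2.1 > 0 : interior part
      left
      have hle : ∀ n, (x n).2.1 * Real.exp ((x n).2.2 / (x n).2.1) ≤ (x n).1 := by
        intro n
        obtain ⟨ha, hb, hc⟩ := hxS n
        have hdiv : (x n).2.2 / (x n).2.1 ≤ Real.log ((x n).1 / (x n).2.1) :=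
          (div_le_iff₀ hb).mpr (by linarith [hc])
        have := Real.exp_le_exp.mpr hdiv
        rw [Real.exp_log (div_pos ha hb)] at this
        calc (x n).2.1 * Real.exp ((x n).2.2 / (x n).2.1)
            ≤ (x n).2.1 * ((x n).1 / (x n).2.1) := by
              exact mul_le_mul_of_nonneg_left this hb.le
          _ = (x n).1 := by field_simp
      have hR : Tendsto (fun n => (x n).2.1 * Real.exp ((x n).2.2 / (x n).2.1)) atTop
          (𝓝 (v.2.1 * Real.exp (v.2.2 / v.2.1))) :=
        h2.mul ((Real.continuous_exp.tendsto _).comp (h3.div h2 hv2p.ne'))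
      have key : v.2.1 * Real.exp (v.2.2 / v.2.1) ≤ v.1 :=
        le_of_tendsto_of_tendsto' hR h1 hle
      have hpos : 0 < v.2.1 * Real.exp (v.2.2 / v.2.1) :=
        mul_pos hv2p (Real.exp_pos _)
      have hv1p : 0 < v.1 := lt_of_lt_of_le hpos key
      refine ⟨hv1p, hv2p, ?_⟩
      have hexp : Real.exp (v.2.2 / v.2.1) ≤ v.1 / v.2.1 :=
        (le_div_iff₀ hv2p).mpr (by linarith [key])
      have hlog : v.2.2 / v.2.1 ≤ Real.log (v.1 / v.2.1) :=
        (Real.le_log_iff_exp_le (div_pos hv1p hv2p)).mpr hexp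
      calc v.2.2 = v.2.1 * (v.2.2 / v.2.1) := by field_simp
        _ ≤ v.2.1 * Real.log (v.1 / v.2.1) :=
            mul_le_mul_of_nonneg_left hlog hv2p.le
  · rintro v (hv | ⟨hv1, hv2, hv3⟩)
    · exact subset_closure hv
    · -- approximate (v₁, 0, v₃) by (v₁ + εₙ, εₙ, v₃)
      have hv' : v = (v.1, v.2.1, v.2.2) := rfl
      set t : ℕ → ℝ := fun n => ((n : ℝ) + 1)⁻¹ with ht
      have htpos : ∀ n, 0 < t n := fun n => by positivity
      have htlim : Tendsto t atTop (𝓝 0) := by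
        simpa [ht, one_div] using tendsto_one_div_add_atTop_nhds_zero_nat (𝕜 := ℝ)
      have hT : Tendsto (fun n => ((v.1 + t n, t n, v.2.2) : ℝ × ℝ × ℝ)) atTop (𝓝 v) := by
        rw [hv', hv2]
        have hA : Tendsto (fun n => v.1 + t n) atTop (𝓝 v.1) := by
          simpa using (tendsto_const_nhds (x := v.1) (f := atTop)).add htlim
        have hC : Tendsto (fun _ : ℕ => v.2.2) atTop (𝓝 v.2.2) := tendsto_const_nhds
        exact hA.prodMk_nhds (htlim.prodMk_nhds hC)
      refine mem_closure_of_tendsto hT (Eventually.of_forall fun n => ?_)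
      · simp only [Set.mem_setOf_eq]
        refine ⟨by have := htpos n; linarith, htpos n, ?_⟩
        have h1 : (1 : ℝ) ≤ (v.1 + t n) / t n :=
          (one_le_div (htpos n)).mpr (by linarith)
        have := mul_nonneg (htpos n).le (Real.log_nonneg h1)
        exact hv3.trans this
end
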